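/- arXiv:1509.09198 — 3 statements merged into one kernel-verified Lean document; each statement's English description precedes it below -/
import Mathlib

section
/- Zeroth order homogenization (Lemma 1, first part). For every M > 0 and T₀ > 0 there exist constants C > 0 and ε₀ > 0, depending only on l, A, X, Λ, g, c, δ, M and T₀, such that the following holds for every ε ∈ (0, ε₀]: if (U, B) is a bounded C¹ classical solution of the system on ℝ × [0, T₀/ε] whose first-order partial derivatives are bounded in absolute value by M, and if (i) sup_{x∈ℝ} |A U_x(x,0) + g B_x(x,0)| ≤ M ε and (ii) B₀ := B(·,0) lies in W^{1,∞}(ℝ) with ‖B₀‖_{W^{1,∞}} ≤ M, then sup_{x∈ℝ, 0 ≤ t ≤ T₀/ε} |B(x,t) − B₀(x − λ_B^{(0)} ε t)| ≤ C ε. -/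
open Matrix Set

set_option maxHeartbeats 3200000

/-- Bound for a dot product against a sup-norm bounded vector. -/
lemma aux_dot_abs {l : ℕ} (v w : Fin l → ℝ) (m : ℝ) (hw : ‖w‖ ≤ m) :
    |v ⬝ᵥ w| ≤ (∑ j, |v j|) * m := by
  calc |v ⬝ᵥ w| = |∑ j, v j * w j| := by simp [dotProduct]
    _ ≤ ∑ j, |v j * w j| := Finset.abs_sum_le_sum_abs _ _
    _ ≤ ∑ j, |v j| * m := Finset.sum_le_sum (fun j _ => by
        rw [abs_mul]
        exact mul_le_mul_of_nonneg_left
          ((by simpa using norm_le_pi_norm w j : |w j| ≤ ‖w‖).trans hw) (abs_nonneg _))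
    _ = (∑ j, |v j|) * m := by rw [Finset.sum_mul]

/-- Directional derivative along a line for a jointly `C¹` function of two real
variables with prescribed partial derivatives. -/
lemma aux_dir {T : ℝ} (hT : 0 < T) (F Fx Ft : ℝ → ℝ → ℝ)
    (hC : ContDiffOn ℝ 1 (fun p : ℝ × ℝ => F p.1 p.2) (univ ×ˢ Icc (0:ℝ) T))
    (hx : ∀ z : ℝ, ∀ s ∈ Icc (0:ℝ) T, HasDerivAt (fun z' => F z' s) (Fx z s) z)
    (ht : ∀ z : ℝ, ∀ s ∈ Icc (0:ℝ) T, HasDerivWithinAt (fun s' => F z s') (Ft z s) (Icc (0:ℝ) T) s)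
    (z₀ μ : ℝ) (s : ℝ) (hs : s ∈ Icc (0:ℝ) T) :
    HasDerivWithinAt (fun σ => F (z₀ + μ * σ) σ)
      (μ * Fx (z₀ + μ * s) s + Ft (z₀ + μ * s) s) (Icc (0:ℝ) T) s := by
  set S : Set (ℝ × ℝ) := univ ×ˢ Icc (0:ℝ) T with hS
  have hUD : UniqueDiffOn ℝ S := uniqueDiffOn_univ.prod (uniqueDiffOn_Icc hT)
  set z : ℝ := z₀ + μ * s with hz
  have hp : ((z, s) : ℝ × ℝ) ∈ S := ⟨mem_univ _, hs⟩
  have hdiff : DifferentiableOn ℝ (fun p : ℝ × ℝ => F p.1 p.2) S :=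
    hC.differentiableOn one_ne_zero
  set D := fderivWithin ℝ (fun p : ℝ × ℝ => F p.1 p.2) S (z, s) with hD
  have hFD : HasFDerivWithinAt (fun p : ℝ × ℝ => F p.1 p.2) D S (z, s) :=
    (hdiff (z, s) hp).hasFDerivWithinAt
  have hL1 : HasDerivAt (fun z' : ℝ => ((z', s) : ℝ × ℝ)) ((1:ℝ), (0:ℝ)) z :=
    (hasDerivAt_id z).prodMk (hasDerivAt_const z s)
  have hcomp1 : HasDerivWithinAt (fun z' : ℝ => F z' s) (D (1, 0)) univ z := by
    have := hFD.comp_hasDerivWithinAt z (hL1.hasDerivWithinAt (s := univ))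
      (fun a _ => (⟨mem_univ _, hs⟩ : ((a, s) : ℝ × ℝ) ∈ S))
    exact this
  have h1 : D (1, 0) = Fx z s := by
    have h1' := hcomp1.derivWithin uniqueDiffWithinAt_univ
    have h2' := ((hx z s hs).hasDerivWithinAt (s := univ)).derivWithin uniqueDiffWithinAt_univ
    rw [← h1', ← h2']
  have hL2 : HasDerivAt (fun s' : ℝ => ((z, s') : ℝ × ℝ)) ((0:ℝ), (1:ℝ)) s :=
    (hasDerivAt_const s z).prodMk (hasDerivAt_id s)
  have hcomp2 : HasDerivWithinAt (fun s' : ℝ => F z s') (D (0, 1)) (Icc (0:ℝ) T) s := by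
    have := hFD.comp_hasDerivWithinAt s (hL2.hasDerivWithinAt (s := Icc (0:ℝ) T))
      (fun a ha => (⟨mem_univ _, ha⟩ : ((z, a) : ℝ × ℝ) ∈ S))
    exact this
  have h2 : D (0, 1) = Ft z s := by
    have hu : UniqueDiffWithinAt ℝ (Icc (0:ℝ) T) s := (uniqueDiffOn_Icc hT) s hs
    have h1' := hcomp2.derivWithin hu
    have h2' := (ht z s hs).derivWithin hu
    rw [← h1', ← h2']
  have hLσ : HasDerivAt (fun σ : ℝ => ((z₀ + μ * σ, σ) : ℝ × ℝ)) ((μ, 1)) s := by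
    have := ((((hasDerivAt_id s).const_mul μ).const_add z₀)).prodMk (hasDerivAt_id s)
    simpa using this
  have hcomp : HasDerivWithinAt (fun σ => F (z₀ + μ * σ) σ) (D (μ, 1)) (Icc (0:ℝ) T) s := by
    have := hFD.comp_hasDerivWithinAt_of_eq s (hLσ.hasDerivWithinAt (s := Icc (0:ℝ) T))
      (fun a ha => (⟨mem_univ _, ha⟩ : ((z₀ + μ * a, a) : ℝ × ℝ) ∈ S)) rfl
    exact this
  have hval : D (μ, 1) = μ * Fx z s + Ft z s := by
    have : ((μ, 1) : ℝ × ℝ) = μ • ((1:ℝ), (0:ℝ)) + ((0:ℝ), (1:ℝ)) := by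
      simp [Prod.ext_iff]
    rw [this, map_add, _root_.map_smul, h1, h2]
    simp [smul_eq_mul]
  exact hval ▸ hcomp

/-- Zeroth order homogenization (Lemma 1, first part) for the linear system
`U_t + A U_x = −g B_x`, `B_t + ε cᵀ U_x = 0`, with `A = X⁻¹ Λ X`, `Λ` real
diagonal with pairwise distinct eigenvalues of modulus at least `δ > 0`.
For all `M, T₀ > 0` there are `C, ε₀ > 0`, depending only on the data
`l, A, X, Λ, g, c, δ, M, T₀`, such that for every `ε ∈ (0, ε₀]` and every
bounded `C¹` solution on `ℝ × [0, T₀/ε]` with first derivatives bounded by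
`M`, initial approximate steadiness `|A U_x(·,0) + g B_x(·,0)| ≤ M ε`, and
`B₀ = B(·,0) ∈ W^{1,∞}` with norm at most `M`, the riverbed stays within
`C ε` of the zeroth order prediction `B₀(x − λ_B⁰ ε t)`,
`λ_B⁰ = −cᵀ A⁻¹ g`, for all `t ∈ [0, T₀/ε]`. -/
theorem stmt_0 (l : ℕ) (A X : Matrix (Fin l) (Fin l) ℝ) (lam : Fin l → ℝ)
    (g c : Fin l → ℝ) (δ : ℝ) (hδ : 0 < δ)
    (hX : IsUnit X) (hA : A = X⁻¹ * Matrix.diagonal lam * X)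
    (hdistinct : ∀ i j : Fin l, i ≠ j → lam i ≠ lam j)
    (hlam : ∀ i : Fin l, δ ≤ |lam i|)
    (M T₀ : ℝ) (hM : 0 < M) (hT₀ : 0 < T₀) :
    ∃ C > 0, ∃ ε₀ > 0, ∀ ε : ℝ, 0 < ε → ε ≤ ε₀ →
      ∀ (U : ℝ → ℝ → Fin l → ℝ) (B : ℝ → ℝ → ℝ)
        (Ux Ut : ℝ → ℝ → Fin l → ℝ) (Bx Bt : ℝ → ℝ → ℝ),
        -- (U, B) is a C¹ classical solution on ℝ × [0, T₀/ε]
        (∀ x : ℝ, ∀ t ∈ Icc (0 : ℝ) (T₀ / ε),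
          HasDerivAt (fun x' => U x' t) (Ux x t) x ∧
          HasDerivWithinAt (fun t' => U x t') (Ut x t) (Icc 0 (T₀ / ε)) t ∧
          HasDerivAt (fun x' => B x' t) (Bx x t) x ∧
          HasDerivWithinAt (fun t' => B x t') (Bt x t) (Icc 0 (T₀ / ε)) t) →
        -- joint C¹ regularity of the solution on ℝ × [0, T₀/ε]
        ContDiffOn ℝ 1 (fun p : ℝ × ℝ => U p.1 p.2)
          (univ ×ˢ Icc (0:ℝ) (T₀ / ε)) →
        ContDiffOn ℝ 1 (fun p : ℝ × ℝ => B p.1 p.2)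
          (univ ×ˢ Icc (0:ℝ) (T₀ / ε)) →
        -- boundedness of the solution
        (∃ K : ℝ, ∀ x : ℝ, ∀ t ∈ Icc (0 : ℝ) (T₀ / ε),
          ‖U x t‖ ≤ K ∧ |B x t| ≤ K) →
        -- first-order partial derivatives bounded by M
        (∀ x : ℝ, ∀ t ∈ Icc (0 : ℝ) (T₀ / ε),
          ‖Ux x t‖ ≤ M ∧ ‖Ut x t‖ ≤ M ∧ |Bx x t| ≤ M ∧ |Bt x t| ≤ M) →
        -- the linear hyperbolic system
        (∀ x : ℝ, ∀ t ∈ Icc (0 : ℝ) (T₀ / ε),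
          Ut x t + A.mulVec (Ux x t) = -(Bx x t) • g ∧
          Bt x t + ε * (c ⬝ᵥ Ux x t) = 0) →
        -- (i) approximate steadiness of the initial data
        (∀ x : ℝ, ‖A.mulVec (Ux x 0) + Bx x 0 • g‖ ≤ M * ε) →
        -- (ii) B₀ = B(·,0) ∈ W^{1,∞}(ℝ) with norm ≤ M
        (∀ x : ℝ, |B x 0| ≤ M ∧ |Bx x 0| ≤ M) →
        ∀ x : ℝ, ∀ t ∈ Icc (0 : ℝ) (T₀ / ε),
          |B x t - B (x - -(c ⬝ᵥ A⁻¹.mulVec g) * ε * t) 0| ≤ C * ε := by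
  -- algebraic preliminaries
  have hdet : IsUnit X.det := (Matrix.isUnit_iff_isUnit_det X).mp hX
  have hX'X : X⁻¹ * X = 1 := Matrix.nonsing_inv_mul X hdet
  have hXX' : X * X⁻¹ = 1 := Matrix.mul_nonsing_inv X hdet
  have hlam0 : ∀ k, lam k ≠ 0 := by
    intro k hk
    have := hlam k
    rw [hk, abs_zero] at this
    linarith
  set lamB : ℝ := -(c ⬝ᵥ A⁻¹.mulVec g) with hlamB_def
  set d : Fin l → ℝ := Matrix.vecMul c X⁻¹ with hd_def
  set Xg : Fin l → ℝ := X.mulVec g with hXg_def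
  have hdX : Matrix.vecMul d X = c := by
    rw [hd_def, Matrix.vecMul_vecMul, hX'X, Matrix.vecMul_one]
  have hcd : ∀ u : Fin l → ℝ, c ⬝ᵥ u = ∑ k, d k * (X.mulVec u) k := by
    intro u
    have : d ⬝ᵥ X.mulVec u = Matrix.vecMul d X ⬝ᵥ u := Matrix.dotProduct_mulVec d X u
    rw [hdX] at this
    rw [← this]
    simp [dotProduct]
  have hXAu : ∀ u : Fin l → ℝ, X.mulVec (A.mulVec u) = fun k => lam k * (X.mulVec u) k := by
    intro u
    have hXA : X * A = Matrix.diagonal lam * X := by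
      rw [hA, ← Matrix.mul_assoc, ← Matrix.mul_assoc, hXX', Matrix.one_mul]
    rw [Matrix.mulVec_mulVec, hXA, ← Matrix.mulVec_mulVec]
    funext k
    exact Matrix.mulVec_diagonal _ _ _
  have hdiaginv : (Matrix.diagonal lam)⁻¹ = Matrix.diagonal (fun k => (lam k)⁻¹) := by
    apply Matrix.inv_eq_right_inv
    rw [Matrix.diagonal_mul_diagonal]
    have : (fun k => lam k * (lam k)⁻¹) = fun _ : Fin l => (1:ℝ) :=
      funext fun k => mul_inv_cancel₀ (hlam0 k)
    rw [this, Matrix.diagonal_one]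
  have hAinv : A⁻¹ = X⁻¹ * Matrix.diagonal (fun k => (lam k)⁻¹) * X := by
    rw [hA, Matrix.mul_inv_rev, Matrix.mul_inv_rev,
      Matrix.nonsing_inv_nonsing_inv X hdet, hdiaginv, ← Matrix.mul_assoc]
  have hlamB_eq : lamB = -(∑ k, d k * ((lam k)⁻¹ * Xg k)) := by
    rw [hlamB_def]
    congr 1
    rw [hAinv, ← Matrix.mulVec_mulVec, ← Matrix.mulVec_mulVec, Matrix.dotProduct_mulVec, ← hd_def,
      ← hXg_def]
    have : (Matrix.diagonal (fun k => (lam k)⁻¹)).mulVec Xg = fun k => (lam k)⁻¹ * Xg k := by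
      funext k
      exact Matrix.mulVec_diagonal _ _ _
    rw [this]
    simp [dotProduct]
  -- the constants
  set Cc : ℝ := ∑ j, |c j| with hCc_def
  set CX : ℝ := ∑ k, ∑ j, |X k j| with hCX_def
  have hCc0 : 0 ≤ Cc := Finset.sum_nonneg (fun j _ => abs_nonneg _)
  have hCX0 : 0 ≤ CX := Finset.sum_nonneg (fun k _ => Finset.sum_nonneg (fun j _ => abs_nonneg _))
  set KB : ℝ := M + Cc * M * T₀ with hKB_def
  have hKB0 : 0 ≤ KB := by
    have : 0 ≤ Cc * M * T₀ := by positivity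
    simp only [hKB_def]; linarith
  set CO : Fin l → ℝ := fun k =>
    |Xg k| / δ * (2 * KB + Cc * M * T₀ + 2 * M) + CX * M / δ * (|lam k| + |lamB|) * T₀
    with hCO_def
  have hCO0 : ∀ k, 0 ≤ CO k := by
    intro k
    have h1 : 0 ≤ |Xg k| / δ * (2 * KB + Cc * M * T₀ + 2 * M) := by
      apply mul_nonneg (div_nonneg (abs_nonneg _) hδ.le)
      have : 0 ≤ Cc * M * T₀ := by positivity
      linarith
    have h2 : 0 ≤ CX * M / δ * (|lam k| + |lamB|) * T₀ := by
      apply mul_nonneg (mul_nonneg (div_nonneg (mul_nonneg hCX0 hM.le) hδ.le)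
        (add_nonneg (abs_nonneg _) (abs_nonneg _))) hT₀.le
    simp only [hCO_def]; linarith
  set Cκ : ℝ := |lamB| * (2 / δ ^ 2) * (∑ k, |d k * Xg k|) with hCκ_def
  have hCκ0 : 0 ≤ Cκ := by
    apply mul_nonneg (mul_nonneg (abs_nonneg _) (by positivity))
    exact Finset.sum_nonneg (fun k _ => abs_nonneg _)
  refine ⟨Cκ * M * T₀ + 2 / δ * (∑ k, |d k| * CO k) + 1, ?_, min 1 (δ / (2 * (|lamB| + 1))), ?_, ?_⟩
  · have h1 : 0 ≤ Cκ * M * T₀ := by positivity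
    have h2 : 0 ≤ 2 / δ * (∑ k, |d k| * CO k) := by
      apply mul_nonneg (by positivity)
      exact Finset.sum_nonneg (fun k _ => mul_nonneg (abs_nonneg _) (hCO0 k))
    linarith
  · exact lt_min one_pos (div_pos hδ (by positivity))
  intro ε hε hεle U B Ux Ut Bx Bt hderiv hCU hCB _hbnd hM1 hsys hsteady hinit x t ht
  set T : ℝ := T₀ / ε with hT_def
  have hTpos : 0 < T := div_pos hT₀ hε
  have hε1 : ε ≤ 1 := hεle.trans (min_le_left _ _)
  have hεδ : ε * |lamB| ≤ δ / 2 := by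
    have h1 : ε ≤ δ / (2 * (|lamB| + 1)) := hεle.trans (min_le_right _ _)
    have h2 : 0 < 2 * (|lamB| + 1) := by positivity
    rw [le_div_iff₀ h2] at h1
    nlinarith [abs_nonneg lamB]
  have hden : ∀ k, δ / 2 ≤ |lamB * ε - lam k| := by
    intro k
    have h1 : |lamB * ε| ≤ δ / 2 := by
      rw [abs_mul, abs_of_pos hε, mul_comm]
      exact hεδ
    have h2 := abs_sub_abs_le_abs_sub (lam k) (lamB * ε)
    rw [abs_sub_comm] at h2
    have := hlam k
    linarith
  have hden0 : ∀ k, lamB * ε - lam k ≠ 0 := by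
    intro k hk
    have := hden k
    rw [hk, abs_zero] at this
    linarith
  have hεT : ε * T = T₀ := by
    rw [hT_def]
    field_simp
  have hεs : ∀ s, s ∈ Icc (0:ℝ) T → ε * s ≤ T₀ := by
    intro s hs
    have := mul_le_mul_of_nonneg_left hs.2 hε.le
    rw [hεT] at this
    exact this
  have hts : ∀ s ∈ Icc (0:ℝ) t, s ∈ Icc (0:ℝ) T := fun s hs => ⟨hs.1, hs.2.trans ht.2⟩
  have h0T : (0:ℝ) ∈ Icc (0:ℝ) T := ⟨le_refl _, hTpos.le⟩
  have hsub : Icc (0:ℝ) t ⊆ Icc (0:ℝ) T := Icc_subset_Icc le_rfl ht.2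
  -- componentwise derivatives of V = X U
  have hVd : ∀ (k : Fin l) (z : ℝ), ∀ s ∈ Icc (0:ℝ) T,
      HasDerivAt (fun z' => (X.mulVec (U z' s)) k) ((X.mulVec (Ux z s)) k) z ∧
      HasDerivWithinAt (fun s' => (X.mulVec (U z s')) k) ((X.mulVec (Ut z s)) k)
        (Icc (0:ℝ) T) s := by
    intro k z s hs
    obtain ⟨hUx, hUt, -, -⟩ := hderiv z s hs
    have hx' : ∀ j, HasDerivAt (fun z' => U z' s j) (Ux z s j) z := by
      intro j
      have := (ContinuousLinearMap.proj (R := ℝ) (φ := fun _ : Fin l => ℝ) j).hasFDerivAt.comp_hasDerivAt z hUx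
      exact this
    have ht' : ∀ j, HasDerivWithinAt (fun s' => U z s' j) (Ut z s j) (Icc (0:ℝ) T) s := by
      intro j
      have := (ContinuousLinearMap.proj (R := ℝ) (φ := fun _ : Fin l => ℝ) j).hasFDerivAt.comp_hasDerivWithinAt s hUt
      exact this
    constructor
    · have := HasDerivAt.fun_sum (u := Finset.univ) (fun j _ => (hx' j).const_mul (X k j))
      simpa [Matrix.mulVec, dotProduct] using this
    · have := HasDerivWithinAt.fun_sum (u := Finset.univ) (fun j _ => (ht' j).const_mul (X k j))
      simpa [Matrix.mulVec, dotProduct] using this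
  -- joint C¹ regularity of components of V
  have hCV : ∀ k : Fin l, ContDiffOn ℝ 1 (fun p : ℝ × ℝ => (X.mulVec (U p.1 p.2)) k)
      (univ ×ˢ Icc (0:ℝ) T) := by
    intro k
    have h1 : ContDiffOn ℝ 1 (fun p : ℝ × ℝ => ∑ j, X k j * U p.1 p.2 j)
        (univ ×ˢ Icc (0:ℝ) T) := by
      apply ContDiffOn.sum
      intro j _
      exact contDiffOn_const.mul
        (((ContinuousLinearMap.proj (R := ℝ) (φ := fun _ : Fin l => ℝ) j).contDiff).comp_contDiffOn hCU)
    exact h1.congr (fun p hp => by simp [Matrix.mulVec, dotProduct])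
  -- the system in characteristic variables
  have hveq : ∀ (k : Fin l) (z : ℝ), ∀ s ∈ Icc (0:ℝ) T,
      (X.mulVec (Ut z s)) k = -(lam k * (X.mulVec (Ux z s)) k) - Bx z s * Xg k := by
    intro k z s hs
    have h1 := (hsys z s hs).1
    have h2 := congrArg (fun u => (X.mulVec u) k) h1
    simp only [Matrix.mulVec_add] at h2
    have h3 : (X.mulVec (A.mulVec (Ux z s))) k = lam k * (X.mulVec (Ux z s)) k :=
      congrFun (hXAu (Ux z s)) k
    have h4 : (X.mulVec (-(Bx z s) • g)) k = -(Bx z s) * Xg k := by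
      rw [Matrix.mulVec_smul, hXg_def]
      simp [smul_eq_mul]
    simp only [Pi.add_apply] at h2
    rw [h3, h4] at h2
    linarith
  have hBt_eq : ∀ (z : ℝ), ∀ s ∈ Icc (0:ℝ) T, Bt z s = -(ε * (c ⬝ᵥ Ux z s)) := by
    intro z s hs
    exact eq_neg_of_add_eq_zero_left (hsys z s hs).2
  have hBt_bd : ∀ (z : ℝ), ∀ s ∈ Icc (0:ℝ) T, |Bt z s| ≤ ε * (Cc * M) := by
    intro z s hs
    rw [hBt_eq z s hs, abs_neg, abs_mul, abs_of_pos hε]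
    apply mul_le_mul_of_nonneg_left _ hε.le
    have := aux_dot_abs c (Ux z s) M (hM1 z s hs).1
    rw [← hCc_def] at this
    exact this
  -- uniform bound on B
  have hB_bd : ∀ (z : ℝ), ∀ s ∈ Icc (0:ℝ) T, |B z s| ≤ KB := by
    intro z s hs
    have hmvt := Convex.norm_image_sub_le_of_norm_hasDerivWithin_le
      (f := fun s' => B z s') (f' := fun s' => Bt z s') (s := Icc (0:ℝ) T)
      (fun σ hσ => (hderiv z σ hσ).2.2.2)
      (fun σ hσ => by rw [Real.norm_eq_abs]; exact hBt_bd z σ hσ)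
      (convex_Icc _ _) h0T hs
    rw [Real.norm_eq_abs, Real.norm_eq_abs, sub_zero, abs_of_nonneg hs.1] at hmvt
    have h1 : ε * (Cc * M) * s ≤ Cc * M * T₀ := by
      have h2 := hεs s hs
      nlinarith [mul_nonneg hCc0 hM.le]
    have h3 := (hinit z).1
    have h4 := abs_sub_abs_le_abs_sub (B z s) (B z 0)
    simp only [hKB_def]
    linarith
  -- oscillation estimate for the characteristic variables
  set y : ℝ := x - lamB * ε * t with hy_def
  have hosc : ∀ k : Fin l, |(X.mulVec (U x t)) k - (X.mulVec (U y 0)) k| ≤ CO k := by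
    intro k
    set z₀a : ℝ := x - lam k * t with hz₀a_def
    -- part (a): along the fast characteristic
    have hxt : z₀a + lam k * t = x := by rw [hz₀a_def]; ring
    have hψd : ∀ σ ∈ Icc (0:ℝ) t,
        HasDerivWithinAt
          (fun σ' => (X.mulVec (U (z₀a + lam k * σ') σ')) k
            + Xg k / lam k * B (z₀a + lam k * σ') σ')
          (Xg k / lam k * Bt (z₀a + lam k * σ) σ) (Icc (0:ℝ) t) σ := by
      intro σ hσ
      have hσT := hts σ hσ
      have hV := (aux_dir hTpos (fun z s => (X.mulVec (U z s)) k)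
        (fun z s => (X.mulVec (Ux z s)) k) (fun z s => (X.mulVec (Ut z s)) k)
        (hCV k) (fun z s hs => (hVd k z s hs).1) (fun z s hs => (hVd k z s hs).2)
        z₀a (lam k) σ hσT).mono hsub
      have hB := (aux_dir hTpos B Bx Bt hCB (fun z s hs => (hderiv z s hs).2.2.1)
        (fun z s hs => (hderiv z s hs).2.2.2) z₀a (lam k) σ hσT).mono hsub
      have htot := hV.add (hB.const_mul (Xg k / lam k))
      refine htot.congr_deriv (Eq.symm ?_)
      rw [hveq k (z₀a + lam k * σ) σ hσT]
      field_simp [hlam0 k]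
      ring
    have hψbd : ∀ σ ∈ Icc (0:ℝ) t,
        ‖Xg k / lam k * Bt (z₀a + lam k * σ) σ‖ ≤ |Xg k| / δ * (ε * (Cc * M)) := by
      intro σ hσ
      rw [Real.norm_eq_abs, abs_mul, abs_div]
      apply mul_le_mul (div_le_div_of_nonneg_left (abs_nonneg _) hδ (hlam k))
        (hBt_bd _ σ (hts σ hσ)) (abs_nonneg _)
        (div_nonneg (abs_nonneg _) hδ.le)
    have hmvta := Convex.norm_image_sub_le_of_norm_hasDerivWithin_le hψd hψbd
      (convex_Icc _ _) ⟨le_rfl, ht.1⟩ ⟨ht.1, le_rfl⟩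
    rw [Real.norm_eq_abs, Real.norm_eq_abs, sub_zero, abs_of_nonneg ht.1] at hmvta
    rw [hxt] at hmvta
    simp only [mul_zero, add_zero] at hmvta
    have hmvta2 : |Xg k| / δ * (ε * (Cc * M)) * t ≤ |Xg k| / δ * (Cc * M * T₀) := by
      have h2 := hεs t ht
      have h3 : 0 ≤ |Xg k| / δ * (Cc * M) :=
        mul_nonneg (div_nonneg (abs_nonneg _) hδ.le) (mul_nonneg hCc0 hM.le)
      calc |Xg k| / δ * (ε * (Cc * M)) * t = |Xg k| / δ * (Cc * M) * (ε * t) := by ring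
        _ ≤ |Xg k| / δ * (Cc * M) * T₀ := mul_le_mul_of_nonneg_left h2 h3
        _ = |Xg k| / δ * (Cc * M * T₀) := by ring
    have hBb1 := hB_bd x t ht
    have hBb2 := hB_bd z₀a 0 h0T
    have hfrac : |Xg k / lam k| ≤ |Xg k| / δ := by
      rw [abs_div]
      exact div_le_div_of_nonneg_left (abs_nonneg _) hδ (hlam k)
    have hparta : |(X.mulVec (U x t)) k - (X.mulVec (U z₀a 0)) k| ≤
        |Xg k| / δ * (Cc * M * T₀) + |Xg k| / δ * (2 * KB) := by
      have e1 : (X.mulVec (U x t)) k - (X.mulVec (U z₀a 0)) k =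
          ((X.mulVec (U x t)) k + Xg k / lam k * B x t
            - ((X.mulVec (U z₀a 0)) k + Xg k / lam k * B z₀a 0))
          - Xg k / lam k * (B x t - B z₀a 0) := by ring
      rw [e1]
      have h5 := abs_sub (((X.mulVec (U x t)) k + Xg k / lam k * B x t
            - ((X.mulVec (U z₀a 0)) k + Xg k / lam k * B z₀a 0)))
        (Xg k / lam k * (B x t - B z₀a 0))
      have h6 : |Xg k / lam k * (B x t - B z₀a 0)| ≤ |Xg k| / δ * (2 * KB) := by
        rw [abs_mul]
        have h7 : |B x t - B z₀a 0| ≤ 2 * KB := by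
          have := abs_sub (B x t) (B z₀a 0)
          linarith
        exact mul_le_mul hfrac h7 (abs_nonneg _) (div_nonneg (abs_nonneg _) hδ.le)
      calc _ ≤ _ := h5
        _ ≤ _ := by
          apply add_le_add _ h6
          exact le_trans hmvta hmvta2
    -- part (b): spatial estimate at time 0 using approximate steadiness
    have hρd : ∀ ξ : ℝ, HasDerivWithinAt (fun ξ' => (X.mulVec (U ξ' 0)) k + Xg k / lam k * B ξ' 0)
        ((X.mulVec (Ux ξ 0)) k + Xg k / lam k * Bx ξ 0) univ ξ := by
      intro ξ
      exact (((hVd k ξ 0 h0T).1).add (((hderiv ξ 0 h0T).2.2.1).const_mul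
        (Xg k / lam k))).hasDerivWithinAt
    have hρbd : ∀ ξ : ℝ, ‖(X.mulVec (Ux ξ 0)) k + Xg k / lam k * Bx ξ 0‖ ≤ CX * (M * ε) / δ := by
      intro ξ
      have e2 : (X.mulVec (Ux ξ 0)) k + Xg k / lam k * Bx ξ 0 =
          (X.mulVec (A.mulVec (Ux ξ 0) + Bx ξ 0 • g)) k / lam k := by
        rw [Matrix.mulVec_add]
        have h3 : (X.mulVec (A.mulVec (Ux ξ 0))) k = lam k * (X.mulVec (Ux ξ 0)) k :=
          congrFun (hXAu (Ux ξ 0)) k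
        have h4 : (X.mulVec (Bx ξ 0 • g)) k = Bx ξ 0 * Xg k := by
          rw [Matrix.mulVec_smul, hXg_def]
          simp [smul_eq_mul]
        simp only [Pi.add_apply]
        rw [h3, h4]
        field_simp [hlam0 k]
      rw [Real.norm_eq_abs, e2, abs_div]
      have h5 : |(X.mulVec (A.mulVec (Ux ξ 0) + Bx ξ 0 • g)) k| ≤ CX * (M * ε) := by
        have h6 := aux_dot_abs (X k) (A.mulVec (Ux ξ 0) + Bx ξ 0 • g) (M * ε) (hsteady ξ)
        have h7 : (∑ j, |X k j|) ≤ CX := by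
          rw [hCX_def]
          exact Finset.single_le_sum (f := fun i => ∑ j, |X i j|)
            (fun i _ => Finset.sum_nonneg (fun j _ => abs_nonneg _)) (Finset.mem_univ k)
        have h8 : (X.mulVec (A.mulVec (Ux ξ 0) + Bx ξ 0 • g)) k
            = X k ⬝ᵥ (A.mulVec (Ux ξ 0) + Bx ξ 0 • g) := rfl
        rw [h8]
        exact h6.trans (mul_le_mul_of_nonneg_right h7 (by positivity))
      calc |(X.mulVec (A.mulVec (Ux ξ 0) + Bx ξ 0 • g)) k| / |lam k|
          ≤ |(X.mulVec (A.mulVec (Ux ξ 0) + Bx ξ 0 • g)) k| / δ :=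
            div_le_div_of_nonneg_left (abs_nonneg _) hδ (hlam k)
        _ ≤ CX * (M * ε) / δ := div_le_div_of_nonneg_right h5 hδ.le
    have hmvtb := Convex.norm_image_sub_le_of_norm_hasDerivWithin_le (fun ξ _ => hρd ξ)
      (fun ξ _ => hρbd ξ) convex_univ (mem_univ y) (mem_univ z₀a)
    rw [Real.norm_eq_abs, Real.norm_eq_abs] at hmvtb
    have hdist : CX * (M * ε) / δ * |z₀a - y| ≤ CX * M / δ * (|lam k| + |lamB|) * T₀ := by
      have hz : z₀a - y = (lamB * ε - lam k) * t := by
        rw [hz₀a_def, hy_def]; ring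
      have h9 : |z₀a - y| ≤ (|lamB| + |lam k|) * t := by
        rw [hz, abs_mul, abs_of_nonneg ht.1]
        apply mul_le_mul_of_nonneg_right _ ht.1
        calc |lamB * ε - lam k| ≤ |lamB * ε| + |lam k| := abs_sub _ _
          _ ≤ |lamB| + |lam k| := by
              rw [abs_mul, abs_of_pos hε]
              nlinarith [abs_nonneg lamB]
      have h10 : 0 ≤ CX * (M * ε) / δ := by positivity
      calc CX * (M * ε) / δ * |z₀a - y| ≤ CX * (M * ε) / δ * ((|lamB| + |lam k|) * t) :=
            mul_le_mul_of_nonneg_left h9 h10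
        _ = CX * M / δ * (|lam k| + |lamB|) * (ε * t) := by ring
        _ ≤ CX * M / δ * (|lam k| + |lamB|) * T₀ := by
            apply mul_le_mul_of_nonneg_left (hεs t ht)
            positivity
    -- combine (a) and (b)
    have hpartb : |(X.mulVec (U z₀a 0)) k - (X.mulVec (U y 0)) k| ≤
        |Xg k| / δ * (2 * M) + CX * M / δ * (|lam k| + |lamB|) * T₀ := by
      have e1 : (X.mulVec (U z₀a 0)) k - (X.mulVec (U y 0)) k =
          ((X.mulVec (U z₀a 0)) k + Xg k / lam k * B z₀a 0
            - ((X.mulVec (U y 0)) k + Xg k / lam k * B y 0))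
          - Xg k / lam k * (B z₀a 0 - B y 0) := by ring
      rw [e1]
      have h5 := abs_sub ((X.mulVec (U z₀a 0)) k + Xg k / lam k * B z₀a 0
            - ((X.mulVec (U y 0)) k + Xg k / lam k * B y 0))
        (Xg k / lam k * (B z₀a 0 - B y 0))
      have h6 : |Xg k / lam k * (B z₀a 0 - B y 0)| ≤ |Xg k| / δ * (2 * M) := by
        rw [abs_mul]
        have h7 : |B z₀a 0 - B y 0| ≤ 2 * M := by
          have h8 := abs_sub (B z₀a 0) (B y 0)
          have h9 := (hinit z₀a).1
          have h10 := (hinit y).1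
          linarith
        exact mul_le_mul hfrac h7 (abs_nonneg _) (div_nonneg (abs_nonneg _) hδ.le)
      calc _ ≤ _ := h5
        _ ≤ _ := by
          rw [add_comm (|Xg k| / δ * (2 * M))]
          apply add_le_add _ h6
          exact hmvtb.trans hdist
    have := abs_sub ((X.mulVec (U x t)) k - (X.mulVec (U z₀a 0)) k)
      (-((X.mulVec (U z₀a 0)) k - (X.mulVec (U y 0)) k))
    rw [abs_neg] at this
    have e2 : (X.mulVec (U x t)) k - (X.mulVec (U y 0)) k =
        ((X.mulVec (U x t)) k - (X.mulVec (U z₀a 0)) k)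
        - -((X.mulVec (U z₀a 0)) k - (X.mulVec (U y 0)) k) := by ring
    rw [e2]
    calc _ ≤ _ := this
      _ ≤ CO k := by
        simp only [hCO_def]
        linarith [hparta, hpartb]
  -- main estimate along the slow characteristic
  set a : Fin l → ℝ := fun k => d k / (lamB * ε - lam k) with ha_def
  have ha_cancel : ∀ k, a k * (lamB * ε - lam k) = d k := by
    intro k
    simp only [ha_def]
    exact div_mul_cancel₀ _ (hden0 k)
  set κ : ℝ := lamB - ∑ k, a k * Xg k with hκ_def2
  have hΦd : ∀ σ ∈ Icc (0:ℝ) t,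
      HasDerivWithinAt
        (fun σ' => B (y + lamB * ε * σ') σ'
          + ε * ∑ k, a k * (X.mulVec (U (y + lamB * ε * σ') σ')) k)
        (ε * κ * Bx (y + lamB * ε * σ) σ) (Icc (0:ℝ) t) σ := by
    intro σ hσ
    have hσT := hts σ hσ
    have hB := (aux_dir hTpos B Bx Bt hCB (fun z s hs => (hderiv z s hs).2.2.1)
      (fun z s hs => (hderiv z s hs).2.2.2) y (lamB * ε) σ hσT).mono hsub
    have hVs : HasDerivWithinAt
        (fun σ' => ∑ k, a k * (X.mulVec (U (y + lamB * ε * σ') σ')) k)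
        (∑ k, a k * (lamB * ε * (X.mulVec (Ux (y + lamB * ε * σ) σ)) k
          + (X.mulVec (Ut (y + lamB * ε * σ) σ)) k)) (Icc (0:ℝ) t) σ := by
      apply HasDerivWithinAt.fun_sum
      intro k _
      exact ((aux_dir hTpos (fun z s => (X.mulVec (U z s)) k)
        (fun z s => (X.mulVec (Ux z s)) k) (fun z s => (X.mulVec (Ut z s)) k)
        (hCV k) (fun z s hs => (hVd k z s hs).1) (fun z s hs => (hVd k z s hs).2)
        y (lamB * ε) σ hσT).mono hsub).const_mul (a k)
    have htot := hB.add (hVs.const_mul ε)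
    refine htot.congr_deriv (Eq.symm ?_)
    rw [hBt_eq (y + lamB * ε * σ) σ hσT, hcd (Ux (y + lamB * ε * σ) σ)]
    have hsum : ∀ k ∈ Finset.univ, a k * (lamB * ε * (X.mulVec (Ux (y + lamB * ε * σ) σ)) k
        + (X.mulVec (Ut (y + lamB * ε * σ) σ)) k)
        = d k * (X.mulVec (Ux (y + lamB * ε * σ) σ)) k
          - a k * Xg k * Bx (y + lamB * ε * σ) σ := by
      intro k _
      rw [hveq k (y + lamB * ε * σ) σ hσT]
      linear_combination (X.mulVec (Ux (y + lamB * ε * σ) σ)) k * ha_cancel k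
    rw [Finset.sum_congr rfl hsum, Finset.sum_sub_distrib, ← Finset.sum_mul, hκ_def2]
    ring
  have hκeq : κ = ∑ k, -(d k * Xg k * (lamB * ε) / (lam k * (lamB * ε - lam k))) := by
    have hterm : ∀ k ∈ Finset.univ, -(d k * ((lam k)⁻¹ * Xg k)) - a k * Xg k
        = -(d k * Xg k * (lamB * ε) / (lam k * (lamB * ε - lam k))) := by
      intro k _
      simp only [ha_def]
      field_simp [hlam0 k, hden0 k]
      ring
    rw [hκ_def2]
    conv_lhs => rw [hlamB_eq]
    rw [show -(∑ k, d k * ((lam k)⁻¹ * Xg k)) - ∑ k, a k * Xg k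
        = ∑ k, (-(d k * ((lam k)⁻¹ * Xg k)) - a k * Xg k) by
      rw [Finset.sum_sub_distrib, Finset.sum_neg_distrib]]
    exact Finset.sum_congr rfl hterm
  have hκbd : |κ| ≤ ε * Cκ := by
    rw [hκeq]
    have h1 : ∀ k ∈ Finset.univ,
        |(-(d k * Xg k * (lamB * ε) / (lam k * (lamB * ε - lam k))))|
        ≤ ε * (|lamB| * (2 / δ ^ 2) * |d k * Xg k|) := by
      intro k _
      rw [abs_neg, abs_div]
      have hDk : δ ^ 2 / 2 ≤ |lam k * (lamB * ε - lam k)| := by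
        rw [abs_mul]
        calc δ ^ 2 / 2 = δ * (δ / 2) := by ring
          _ ≤ |lam k| * |lamB * ε - lam k| :=
              mul_le_mul (hlam k) (hden k) (by positivity) (abs_nonneg _)
      have habsN : |d k * Xg k * (lamB * ε)| = |d k * Xg k| * (|lamB| * ε) := by
        simp only [abs_mul, abs_of_pos hε]
      calc |d k * Xg k * (lamB * ε)| / |lam k * (lamB * ε - lam k)|
          ≤ |d k * Xg k * (lamB * ε)| / (δ ^ 2 / 2) :=
            div_le_div_of_nonneg_left (abs_nonneg _) (by positivity) hDk
        _ = ε * (|lamB| * (2 / δ ^ 2) * |d k * Xg k|) := by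
            rw [habsN]
            field_simp
    calc |∑ k, -(d k * Xg k * (lamB * ε) / (lam k * (lamB * ε - lam k)))|
        ≤ ∑ k, |(-(d k * Xg k * (lamB * ε) / (lam k * (lamB * ε - lam k))))| :=
          Finset.abs_sum_le_sum_abs _ _
      _ ≤ ∑ k, ε * (|lamB| * (2 / δ ^ 2) * |d k * Xg k|) := Finset.sum_le_sum h1
      _ = ε * Cκ := by
          conv_rhs => rw [hCκ_def, Finset.mul_sum, Finset.mul_sum]
  have hΦbd : ∀ σ ∈ Icc (0:ℝ) t,
      ‖ε * κ * Bx (y + lamB * ε * σ) σ‖ ≤ ε * (ε * Cκ) * M := by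
    intro σ hσ
    rw [Real.norm_eq_abs, abs_mul, abs_mul, abs_of_pos hε]
    have h1 := (hM1 (y + lamB * ε * σ) σ (hts σ hσ)).2.2.1
    apply mul_le_mul (mul_le_mul_of_nonneg_left hκbd hε.le) h1 (abs_nonneg _)
    exact mul_nonneg hε.le (mul_nonneg hε.le hCκ0)
  have hmvtm := Convex.norm_image_sub_le_of_norm_hasDerivWithin_le hΦd hΦbd
    (convex_Icc _ _) ⟨le_rfl, ht.1⟩ ⟨ht.1, le_rfl⟩
  have hyt : y + lamB * ε * t = x := by rw [hy_def]; ring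
  simp only [Real.norm_eq_abs, sub_zero, mul_zero, add_zero] at hmvtm
  rw [abs_of_nonneg ht.1, hyt] at hmvtm
  have hmvtm2 : ε * (ε * Cκ) * M * t ≤ ε * (Cκ * M * T₀) := by
    calc ε * (ε * Cκ) * M * t = ε * (Cκ * M) * (ε * t) := by ring
      _ ≤ ε * (Cκ * M) * T₀ := mul_le_mul_of_nonneg_left (hεs t ht)
          (mul_nonneg hε.le (mul_nonneg hCκ0 hM.le))
      _ = ε * (Cκ * M * T₀) := by ring
  have hdiff_eq : B x t - B y 0 =
      (B x t + ε * ∑ k, a k * (X.mulVec (U x t)) k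
        - (B y 0 + ε * ∑ k, a k * (X.mulVec (U y 0)) k))
      - ε * ∑ k, a k * ((X.mulVec (U x t)) k - (X.mulVec (U y 0)) k) := by
    rw [Finset.sum_congr rfl (fun k _ => mul_sub (a k) ((X.mulVec (U x t)) k)
      ((X.mulVec (U y 0)) k)), Finset.sum_sub_distrib]
    ring
  have hsum_bd : |∑ k, a k * ((X.mulVec (U x t)) k - (X.mulVec (U y 0)) k)|
      ≤ ∑ k, 2 * |d k| / δ * CO k := by
    calc |∑ k, a k * ((X.mulVec (U x t)) k - (X.mulVec (U y 0)) k)|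
        ≤ ∑ k, |a k * ((X.mulVec (U x t)) k - (X.mulVec (U y 0)) k)| :=
          Finset.abs_sum_le_sum_abs _ _
      _ ≤ ∑ k, 2 * |d k| / δ * CO k := by
          apply Finset.sum_le_sum
          intro k _
          rw [abs_mul]
          have h1 : |a k| ≤ 2 * |d k| / δ := by
            simp only [ha_def]
            rw [abs_div]
            calc |d k| / |lamB * ε - lam k| ≤ |d k| / (δ / 2) :=
                  div_le_div_of_nonneg_left (abs_nonneg _) (by positivity) (hden k)
              _ = 2 * |d k| / δ := by
                  field_simp
          exact mul_le_mul h1 (hosc k) (abs_nonneg _) (by positivity)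
  have hsum_eq : ∑ k, 2 * |d k| / δ * CO k = 2 / δ * ∑ k, |d k| * CO k := by
    rw [Finset.mul_sum]
    exact Finset.sum_congr rfl (fun k _ => by ring)
  have h2 : |ε * ∑ k, a k * ((X.mulVec (U x t)) k - (X.mulVec (U y 0)) k)|
      ≤ ε * (2 / δ * ∑ k, |d k| * CO k) := by
    rw [abs_mul, abs_of_pos hε]
    exact mul_le_mul_of_nonneg_left (hsum_bd.trans (le_of_eq hsum_eq)) hε.le
  rw [hdiff_eq]
  calc |B x t + ε * ∑ k, a k * (X.mulVec (U x t)) k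
        - (B y 0 + ε * ∑ k, a k * (X.mulVec (U y 0)) k)
        - ε * ∑ k, a k * ((X.mulVec (U x t)) k - (X.mulVec (U y 0)) k)|
      ≤ |B x t + ε * ∑ k, a k * (X.mulVec (U x t)) k
        - (B y 0 + ε * ∑ k, a k * (X.mulVec (U y 0)) k)|
        + |ε * ∑ k, a k * ((X.mulVec (U x t)) k - (X.mulVec (U y 0)) k)| := abs_sub _ _
    _ ≤ ε * (Cκ * M * T₀) + ε * (2 / δ * ∑ k, |d k| * CO k) :=
        add_le_add (hmvtm.trans hmvtm2) h2
    _ ≤ (Cκ * M * T₀ + 2 / δ * (∑ k, |d k| * CO k) + 1) * ε := by nlinarith [hε.le]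
end

section
/- Zeroth order homogenization of the derivative (Lemma 1, second part). For every M > 0 and T₀ > 0 there exist constants C > 0 and ε₀ > 0, depending only on l, A, X, Λ, g, c, δ, M and T₀, such that the following holds for every ε ∈ (0, ε₀]: if (U, B) is a bounded C² classical solution of the system on ℝ × [0, T₀/ε] whose partial derivatives up to order two are bounded in absolute value by M, and if (i) sup_{x∈ℝ} |A U_x(x,0) + g B_x(x,0)| ≤ M ε, (ii) sup_{x∈ℝ} |A U_{xx}(x,0) + g B_{xx}(x,0)| ≤ M ε, and (iii) B₀ := B(·,0) lies in W^{2,∞}(ℝ) with ‖B₀‖_{W^{2,∞}} ≤ M, then sup_{x∈ℝ, 0 ≤ t ≤ T₀/ε} |B_x(x,t) − B₀′(x − λ_B^{(0)} ε t)| ≤ C ε. -/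
open Matrix Set



lemma hasDerivWithinAt_mulVec {l : ℕ} (A : Matrix (Fin l) (Fin l) ℝ)
    {u : ℝ → Fin l → ℝ} {u' : Fin l → ℝ} {s : Set ℝ} {x : ℝ}
    (h : HasDerivWithinAt u u' s x) :
    HasDerivWithinAt (fun y => A.mulVec (u y)) (A.mulVec u') s x := by
  have := ((Matrix.mulVecLin A).toContinuousLinearMap.hasFDerivAt).comp_hasDerivWithinAt x h
  simpa [Function.comp_def] using this

lemma hasDerivAt_mulVec {l : ℕ} (A : Matrix (Fin l) (Fin l) ℝ)
    {u : ℝ → Fin l → ℝ} {u' : Fin l → ℝ} {x : ℝ}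
    (h : HasDerivAt u u' x) :
    HasDerivAt (fun y => A.mulVec (u y)) (A.mulVec u') x := by
  have := ((Matrix.mulVecLin A).toContinuousLinearMap.hasFDerivAt).comp_hasDerivAt x h
  simpa [Function.comp_def] using this

lemma hasDerivWithinAt_pi_apply {l : ℕ} (i : Fin l)
    {u : ℝ → Fin l → ℝ} {u' : Fin l → ℝ} {s : Set ℝ} {x : ℝ}
    (h : HasDerivWithinAt u u' s x) :
    HasDerivWithinAt (fun y => u y i) (u' i) s x := by
  have := ((ContinuousLinearMap.proj (R := ℝ) (φ := fun _ : Fin l => ℝ) i).hasFDerivAt).comp_hasDerivWithinAt x h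
  simpa [Function.comp_def] using this

lemma hasDerivAt_pi_apply {l : ℕ} (i : Fin l)
    {u : ℝ → Fin l → ℝ} {u' : Fin l → ℝ} {x : ℝ}
    (h : HasDerivAt u u' x) :
    HasDerivAt (fun y => u y i) (u' i) x := by
  have := ((ContinuousLinearMap.proj (R := ℝ) (φ := fun _ : Fin l => ℝ) i).hasFDerivAt).comp_hasDerivAt x h
  simpa [Function.comp_def] using this

lemma hasDerivAt_dot {l : ℕ} (c : Fin l → ℝ)
    {u : ℝ → Fin l → ℝ} {u' : Fin l → ℝ} {x : ℝ}
    (h : HasDerivAt u u' x) :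
    HasDerivAt (fun y => c ⬝ᵥ u y) (c ⬝ᵥ u') x := by
  simp only [dotProduct]
  exact HasDerivAt.fun_sum fun i _ => (hasDerivAt_pi_apply i h).const_mul (c i)

lemma hasDerivWithinAt_dot {l : ℕ} (c : Fin l → ℝ)
    {u : ℝ → Fin l → ℝ} {u' : Fin l → ℝ} {s : Set ℝ} {x : ℝ}
    (h : HasDerivWithinAt u u' s x) :
    HasDerivWithinAt (fun y => c ⬝ᵥ u y) (c ⬝ᵥ u') s x := by
  simp only [dotProduct]
  exact HasDerivWithinAt.fun_sum fun i _ => (hasDerivWithinAt_pi_apply i h).const_mul (c i)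

example {c c' : ℝ → ℝ} {s : Set ℝ} {x : ℝ} (g : Fin 3 → ℝ) (h : HasDerivWithinAt c (c' x) s x) :
    HasDerivWithinAt (fun y => c y • g) (c' x • g) s x := h.smul_const g

lemma alg_vec {l : ℕ} (A X : Matrix (Fin l) (Fin l) ℝ) (lam : Fin l → ℝ)
    (g : Fin l → ℝ) (hXA : X * A = diagonal lam * X)
    (v κ b : ℝ) (u : Fin l → ℝ) (k : Fin l) :
    (X.mulVec (A.mulVec (v • u + -(A.mulVec u + b • g)) + (v * b + -κ) • g)) k
      = (v - lam k) * (X.mulVec (A.mulVec u + b • g)) k - κ * (X.mulVec g) k := by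
  set w0 : Fin l → ℝ := A.mulVec u + b • g with hw0
  have h1 : A.mulVec (v • u + -(w0)) + (v * b + -κ) • g
      = v • w0 - A.mulVec w0 - κ • g := by
    rw [hw0]
    simp only [Matrix.mulVec_add, Matrix.mulVec_smul, Matrix.mulVec_neg, add_smul, neg_smul,
      smul_smul]
    module
  have h2 : X.mulVec (A.mulVec w0) = (diagonal lam).mulVec (X.mulVec w0) := by
    rw [Matrix.mulVec_mulVec, hXA, ← Matrix.mulVec_mulVec]
  rw [h1, sub_sub, Matrix.mulVec_sub, Matrix.mulVec_add, Matrix.mulVec_smul, Matrix.mulVec_smul]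
  simp only [Pi.sub_apply, Pi.add_apply, Pi.smul_apply, smul_eq_mul,
    congrFun h2 k, Matrix.mulVec_diagonal]
  ring

lemma alg_sum {l : ℕ} (A X : Matrix (Fin l) (Fin l) ℝ) (lam : Fin l → ℝ)
    (c : Fin l → ℝ) (hAinv : A⁻¹ = X⁻¹ * diagonal (fun k => (lam k)⁻¹) * X)
    (w0 : Fin l → ℝ) :
    ∑ k, ((c ᵥ* X⁻¹) k / lam k) * (X.mulVec w0) k = c ⬝ᵥ A⁻¹.mulVec w0 := by
  rw [hAinv]
  rw [Matrix.mul_assoc]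
  rw [← Matrix.mulVec_mulVec, ← Matrix.mulVec_mulVec, Matrix.dotProduct_mulVec]
  simp only [dotProduct, Matrix.mulVec_diagonal]
  exact Finset.sum_congr rfl fun k _ => by rw [div_eq_mul_inv]; ring

lemma alg_dot {l : ℕ} (A : Matrix (Fin l) (Fin l) ℝ) (c g : Fin l → ℝ)
    (hAinvA : A⁻¹ * A = 1) (b : ℝ) (u : Fin l → ℝ) :
    c ⬝ᵥ A⁻¹.mulVec (A.mulVec u + b • g) = c ⬝ᵥ u + b * (c ⬝ᵥ A⁻¹.mulVec g) := by
  rw [Matrix.mulVec_add, Matrix.mulVec_smul, Matrix.mulVec_mulVec, hAinvA, Matrix.one_mulVec]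
  simp [dotProduct_add, dotProduct_smul, smul_eq_mul]

section Key
variable {E : Type*} [NormedAddCommGroup E] [NormedSpace ℝ E]

lemma key_deriv (T : ℝ) (hT : 0 < T) (f fx ft fxx fxt : ℝ → ℝ → E)
    (hf : ContDiffOn ℝ 2 (fun p : ℝ × ℝ => f p.1 p.2) (univ ×ˢ Icc (0:ℝ) T))
    (h1x : ∀ x : ℝ, ∀ t ∈ Icc (0:ℝ) T, HasDerivAt (fun x' => f x' t) (fx x t) x)
    (h1t : ∀ x : ℝ, ∀ t ∈ Icc (0:ℝ) T,
      HasDerivWithinAt (fun t' => f x t') (ft x t) (Icc 0 T) t)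
    (h2x : ∀ x : ℝ, ∀ t ∈ Icc (0:ℝ) T, HasDerivAt (fun x' => fx x' t) (fxx x t) x)
    (h2t : ∀ x : ℝ, ∀ t ∈ Icc (0:ℝ) T,
      HasDerivWithinAt (fun t' => fx x t') (fxt x t) (Icc 0 T) t) :
    (∀ v x₀ : ℝ, ∀ s ∈ Icc (0:ℝ) T,
      HasDerivWithinAt (fun s' => fx (x₀ + v * s') s')
        (v • fxx (x₀ + v * s) s + fxt (x₀ + v * s) s) (Icc 0 T) s) ∧
    (∀ x : ℝ, ∀ t ∈ Icc (0:ℝ) T, HasDerivAt (fun x' => ft x' t) (fxt x t) x) := by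
  set S : Set (ℝ × ℝ) := univ ×ˢ Icc (0:ℝ) T with hS
  set F : ℝ × ℝ → E := fun p => f p.1 p.2 with hF
  have hSconv : Convex ℝ S := convex_univ.prod (convex_Icc 0 T)
  have hSint : interior S = univ ×ˢ Ioo (0:ℝ) T := by
    rw [hS, interior_prod_eq, interior_univ, interior_Icc]
  have hSne : (interior S).Nonempty := by
    rw [hSint]; exact ⟨(0, T/2), mem_univ _, by constructor <;> linarith⟩
  have hUD : UniqueDiffOn ℝ S := uniqueDiffOn_convex hSconv hSne
  have hmem : ∀ (x : ℝ) {t : ℝ}, t ∈ Icc (0:ℝ) T → (x, t) ∈ S :=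
    fun x t ht => ⟨mem_univ _, ht⟩
  have hIccUD : ∀ t ∈ Icc (0:ℝ) T, UniqueDiffWithinAt ℝ (Icc (0:ℝ) T) t :=
    fun t ht => uniqueDiffOn_Icc hT t ht
  have hFd : DifferentiableOn ℝ F S := hf.differentiableOn (by norm_num)
  have hFL : ∀ p ∈ S, HasFDerivWithinAt F (fderivWithin ℝ F S p) S p :=
    fun p hp => (hFd p hp).hasFDerivWithinAt
  -- identification of first partials
  have hLx : ∀ (x : ℝ) (t : ℝ) (ht : t ∈ Icc (0:ℝ) T),
      fderivWithin ℝ F S (x, t) (1, 0) = fx x t := by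
    intro x t ht
    have hline : HasDerivAt (fun x' : ℝ => (x', t)) ((1:ℝ), (0:ℝ)) x :=
      (hasDerivAt_id x).prodMk (hasDerivAt_const x t)
    have hcomp := (hFL (x, t) (hmem x ht)).comp_hasDerivWithinAt x
      (hline.hasDerivWithinAt (s := univ)) (fun x' _ => hmem x' ht)
    rw [hasDerivWithinAt_univ] at hcomp
    exact (hcomp.congr_deriv rfl : HasDerivAt (fun x' => f x' t) _ x).unique (h1x x t ht)
  have hLt : ∀ (x : ℝ) (t : ℝ) (ht : t ∈ Icc (0:ℝ) T),
      fderivWithin ℝ F S (x, t) (0, 1) = ft x t := by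
    intro x t ht
    have hline : HasDerivAt (fun t' : ℝ => (x, t')) ((0:ℝ), (1:ℝ)) t :=
      (hasDerivAt_const t x).prodMk (hasDerivAt_id t)
    have hcomp := (hFL (x, t) (hmem x ht)).comp_hasDerivWithinAt t
      (hline.hasDerivWithinAt (s := Icc 0 T)) (fun t' ht' => hmem x ht')
    have e1 := hcomp.derivWithin (hIccUD t ht)
    have e2 := (h1t x t ht).derivWithin (hIccUD t ht)
    rw [← e1, ← e2]; rfl

  -- second level
  have hG : ContDiffOn ℝ 1 (fderivWithin ℝ F S) S := hf.fderivWithin hUD (by norm_num)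
  have hGd : DifferentiableOn ℝ (fderivWithin ℝ F S) S := hG.differentiableOn (by norm_num)
  have hGL : ∀ p ∈ S, HasFDerivWithinAt (fderivWithin ℝ F S)
      (fderivWithin ℝ (fderivWithin ℝ F S) S p) S p :=
    fun p hp => (hGd p hp).hasFDerivWithinAt
  set L2 : ℝ × ℝ → (ℝ × ℝ) →L[ℝ] (ℝ × ℝ) →L[ℝ] E := fderivWithin ℝ (fderivWithin ℝ F S) S
    with hL2def
  have Ev : ∀ w : ℝ × ℝ, ((ℝ × ℝ) →L[ℝ] E) →L[ℝ] E := fun w => ContinuousLinearMap.apply ℝ E w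
  -- Gx := p ↦ fderivWithin F S p (1,0), its fderiv within S at p is w ↦ L2 p w (1,0)
  have hGx : ∀ p ∈ S, HasFDerivWithinAt (fun q => fderivWithin ℝ F S q (1, 0))
      ((ContinuousLinearMap.apply ℝ E ((1:ℝ),(0:ℝ))).comp (L2 p)) S p :=
    fun p hp => (ContinuousLinearMap.apply ℝ E ((1:ℝ),(0:ℝ))).hasFDerivAt.comp_hasFDerivWithinAt p (hGL p hp)
  have hGt : ∀ p ∈ S, HasFDerivWithinAt (fun q => fderivWithin ℝ F S q (0, 1))
      ((ContinuousLinearMap.apply ℝ E ((0:ℝ),(1:ℝ))).comp (L2 p)) S p :=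
    fun p hp => (ContinuousLinearMap.apply ℝ E ((0:ℝ),(1:ℝ))).hasFDerivAt.comp_hasFDerivWithinAt p (hGL p hp)
  -- identification: L2 p (1,0) (1,0) = fxx, L2 p (0,1) (1,0) = fxt
  have hL2xx : ∀ (x : ℝ) (t : ℝ) (ht : t ∈ Icc (0:ℝ) T),
      L2 (x, t) (1, 0) (1, 0) = fxx x t := by
    intro x t ht
    have hline : HasDerivAt (fun x' : ℝ => (x', t)) ((1:ℝ), (0:ℝ)) x :=
      (hasDerivAt_id x).prodMk (hasDerivAt_const x t)
    have hcomp := (hGx (x, t) (hmem x ht)).comp_hasDerivWithinAt x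
      (hline.hasDerivWithinAt (s := univ)) (fun x' _ => hmem x' ht)
    rw [hasDerivWithinAt_univ] at hcomp
    have hcomp2 : HasDerivAt (fun x' => fx x' t) (L2 (x, t) (1, 0) (1, 0)) x := by
      have heq : (fun x' : ℝ => fderivWithin ℝ F S (x', t) (1, 0)) = fun x' => fx x' t :=
        funext fun x' => hLx x' t ht
      simp only [Function.comp_def] at hcomp
      rwa [heq] at hcomp
    exact hcomp2.unique (h2x x t ht)
  have hL2xt : ∀ (x : ℝ) (t : ℝ) (ht : t ∈ Icc (0:ℝ) T),
      L2 (x, t) (0, 1) (1, 0) = fxt x t := by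
    intro x t ht
    have hline : HasDerivAt (fun t' : ℝ => (x, t')) ((0:ℝ), (1:ℝ)) t :=
      (hasDerivAt_const t x).prodMk (hasDerivAt_id t)
    have hcomp := (hGx (x, t) (hmem x ht)).comp_hasDerivWithinAt t
      (hline.hasDerivWithinAt (s := Icc 0 T)) (fun t' ht' => hmem x ht')
    have hcomp2 : HasDerivWithinAt (fun t' => fx x t') (L2 (x, t) (0, 1) (1, 0)) (Icc 0 T) t := by
      refine (hcomp.congr (fun t' ht' => ?_) ?_)
      · exact (hLx x t' ht').symm
      · exact (hLx x t ht).symm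
    have e1 := hcomp2.derivWithin (hIccUD t ht)
    have e2 := (h2t x t ht).derivWithin (hIccUD t ht)
    rw [← e1, ← e2]
  constructor
  · -- line derivative for fx
    intro v x₀ s hs
    have hlin : HasDerivAt (fun s' : ℝ => x₀ + v * s') v s := by
      simpa using ((hasDerivAt_id s).const_mul v).const_add x₀
    have hline : HasDerivAt (fun s' : ℝ => ((x₀ + v * s' : ℝ), s')) ((v:ℝ), (1:ℝ)) s :=
      hlin.prodMk (hasDerivAt_id s)
    have hcomp := HasFDerivWithinAt.comp_hasDerivWithinAt
      (f := fun s' : ℝ => ((x₀ + v * s' : ℝ), s')) s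
      (hGx ((x₀ + v * s : ℝ), s) (hmem _ hs))
      (hline.hasDerivWithinAt (s := Icc 0 T)) (fun s' hs' => hmem _ hs')
    have hval : ((ContinuousLinearMap.apply ℝ E ((1:ℝ),(0:ℝ))).comp (L2 ((x₀ + v * s : ℝ), s)))
        ((v:ℝ), (1:ℝ)) = v • fxx (x₀ + v * s) s + fxt (x₀ + v * s) s := by
      have h2 : ((v:ℝ), (1:ℝ)) = v • ((1:ℝ), (0:ℝ)) + ((0:ℝ), (1:ℝ)) := by
        simp [Prod.ext_iff]
      simp only [ContinuousLinearMap.comp_apply, ContinuousLinearMap.apply_apply, h2,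
        map_add, ContinuousLinearMap.map_smul, ContinuousLinearMap.add_apply,
        ContinuousLinearMap.smul_apply]
      rw [hL2xx _ _ hs, hL2xt _ _ hs]
    have hcomp2 : HasDerivWithinAt (fun s' => fx (x₀ + v * s') s')
        ((((ContinuousLinearMap.apply ℝ E) (1, 0)).comp (L2 ((x₀ + v * s : ℝ), s))) ((v:ℝ), (1:ℝ)))
        (Icc 0 T) s :=
      hcomp.congr (fun s' hs' => (hLx _ _ hs').symm) ((hLx _ _ hs).symm)
    exact hval ▸ hcomp2
  · -- Schwarz
    intro x t ht
    have hx_cl : ((x : ℝ), t) ∈ closure (interior S) := by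
      rw [hSint, closure_prod_eq, closure_univ, closure_Ioo hT.ne]
      exact hmem x ht
    have hsym : IsSymmSndFDerivWithinAt ℝ F S (x, t) :=
      (hf.contDiffWithinAt (hmem x ht)).isSymmSndFDerivWithinAt (by simp) hUD hx_cl (hmem x ht)
    have hline : HasDerivAt (fun x' : ℝ => ((x' : ℝ), t)) ((1:ℝ), (0:ℝ)) x :=
      (hasDerivAt_id x).prodMk (hasDerivAt_const x t)
    have hcomp := (hGt (x, t) (hmem x ht)).comp_hasDerivWithinAt x
      (hline.hasDerivWithinAt (s := univ)) (fun x' _ => hmem x' ht)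
    rw [hasDerivWithinAt_univ] at hcomp
    have hcomp2 : HasDerivAt (fun x' => ft x' t) (L2 (x, t) (1, 0) (0, 1)) x := by
      have heq : (fun x' : ℝ => fderivWithin ℝ F S (x', t) (0, 1)) = fun x' => ft x' t :=
        funext fun x' => hLt x' t ht
      simp only [Function.comp_def] at hcomp
      rwa [heq] at hcomp
    have hsymeq : L2 (x, t) (1, 0) (0, 1) = L2 (x, t) (0, 1) (1, 0) := hsym.eq _ _
    rw [hsymeq, hL2xt x t ht] at hcomp2
    exact hcomp2


/-- Zeroth order homogenization of the derivative (Lemma 1, second part) for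
the linear system `U_t + A U_x = −g B_x`, `B_t + ε cᵀ U_x = 0`, with
`A = X⁻¹ Λ X`, `Λ` real diagonal with pairwise distinct eigenvalues of
modulus at least `δ > 0`.  For all `M, T₀ > 0` there are `C, ε₀ > 0`,
depending only on the data, such that for every `ε ∈ (0, ε₀]` and every
bounded `C²` solution on `ℝ × [0, T₀/ε]` with derivatives up to order two
bounded by `M`, initial conditions
`|A U_x(·,0) + g B_x(·,0)| ≤ M ε`, `|A U_{xx}(·,0) + g B_{xx}(·,0)| ≤ M ε`,
and `B₀ = B(·,0) ∈ W^{2,∞}` with norm at most `M`, the spatial derivative of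
the riverbed stays within `C ε` of `B₀′(x − λ_B⁰ ε t)`, `λ_B⁰ = −cᵀ A⁻¹ g`,
for all `t ∈ [0, T₀/ε]`. -/
theorem stmt_1 (l : ℕ) (A X : Matrix (Fin l) (Fin l) ℝ) (lam : Fin l → ℝ)
    (g c : Fin l → ℝ) (δ : ℝ) (hδ : 0 < δ)
    (hX : IsUnit X) (hA : A = X⁻¹ * Matrix.diagonal lam * X)
    (hdistinct : ∀ i j : Fin l, i ≠ j → lam i ≠ lam j)
    (hlam : ∀ i : Fin l, δ ≤ |lam i|)
    (M T₀ : ℝ) (hM : 0 < M) (hT₀ : 0 < T₀) :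
    ∃ C > 0, ∃ ε₀ > 0, ∀ ε : ℝ, 0 < ε → ε ≤ ε₀ →
      ∀ (U : ℝ → ℝ → Fin l → ℝ) (B : ℝ → ℝ → ℝ)
        (Ux Ut Uxx Uxt Utt : ℝ → ℝ → Fin l → ℝ)
        (Bx Bt Bxx Bxt Btt : ℝ → ℝ → ℝ),
        -- (U, B) is a C² classical solution on ℝ × [0, T₀/ε]
        (∀ x : ℝ, ∀ t ∈ Icc (0 : ℝ) (T₀ / ε),
          HasDerivAt (fun x' => U x' t) (Ux x t) x ∧
          HasDerivWithinAt (fun t' => U x t') (Ut x t) (Icc 0 (T₀ / ε)) t ∧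
          HasDerivAt (fun x' => B x' t) (Bx x t) x ∧
          HasDerivWithinAt (fun t' => B x t') (Bt x t) (Icc 0 (T₀ / ε)) t) →
        (∀ x : ℝ, ∀ t ∈ Icc (0 : ℝ) (T₀ / ε),
          HasDerivAt (fun x' => Ux x' t) (Uxx x t) x ∧
          HasDerivWithinAt (fun t' => Ux x t') (Uxt x t) (Icc 0 (T₀ / ε)) t ∧
          HasDerivWithinAt (fun t' => Ut x t') (Utt x t) (Icc 0 (T₀ / ε)) t ∧
          HasDerivAt (fun x' => Bx x' t) (Bxx x t) x ∧
          HasDerivWithinAt (fun t' => Bx x t') (Bxt x t) (Icc 0 (T₀ / ε)) t ∧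
          HasDerivWithinAt (fun t' => Bt x t') (Btt x t) (Icc 0 (T₀ / ε)) t) →
        -- joint C² regularity of the solution on ℝ × [0, T₀/ε]
        ContDiffOn ℝ 2 (fun p : ℝ × ℝ => U p.1 p.2)
          (univ ×ˢ Icc (0:ℝ) (T₀ / ε)) →
        ContDiffOn ℝ 2 (fun p : ℝ × ℝ => B p.1 p.2)
          (univ ×ˢ Icc (0:ℝ) (T₀ / ε)) →
        -- boundedness of the solution
        (∃ K : ℝ, ∀ x : ℝ, ∀ t ∈ Icc (0 : ℝ) (T₀ / ε),
          ‖U x t‖ ≤ K ∧ |B x t| ≤ K) →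
        -- partial derivatives up to order two bounded by M
        (∀ x : ℝ, ∀ t ∈ Icc (0 : ℝ) (T₀ / ε),
          ‖Ux x t‖ ≤ M ∧ ‖Ut x t‖ ≤ M ∧ ‖Uxx x t‖ ≤ M ∧ ‖Uxt x t‖ ≤ M ∧
          ‖Utt x t‖ ≤ M ∧ |Bx x t| ≤ M ∧ |Bt x t| ≤ M ∧ |Bxx x t| ≤ M ∧
          |Bxt x t| ≤ M ∧ |Btt x t| ≤ M) →
        -- the linear hyperbolic system
        (∀ x : ℝ, ∀ t ∈ Icc (0 : ℝ) (T₀ / ε),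
          Ut x t + A.mulVec (Ux x t) = -(Bx x t) • g ∧
          Bt x t + ε * (c ⬝ᵥ Ux x t) = 0) →
        -- (i) approximate steadiness of the initial data
        (∀ x : ℝ, ‖A.mulVec (Ux x 0) + Bx x 0 • g‖ ≤ M * ε) →
        -- (ii) approximate steadiness of the initial data, second order
        (∀ x : ℝ, ‖A.mulVec (Uxx x 0) + Bxx x 0 • g‖ ≤ M * ε) →
        -- (iii) B₀ = B(·,0) ∈ W^{2,∞}(ℝ) with norm ≤ M
        (∀ x : ℝ, |B x 0| ≤ M ∧ |Bx x 0| ≤ M ∧ |Bxx x 0| ≤ M) →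
        ∀ x : ℝ, ∀ t ∈ Icc (0 : ℝ) (T₀ / ε),
          |Bx x t - Bx (x - -(c ⬝ᵥ A⁻¹.mulVec g) * ε * t) 0| ≤ C * ε := by
  classical
  -- matrix facts
  have hXdet : IsUnit X.det := (Matrix.isUnit_iff_isUnit_det X).mp hX
  have hXinv : X⁻¹ * X = 1 := Matrix.nonsing_inv_mul X hXdet
  have hXinv' : X * X⁻¹ = 1 := Matrix.mul_nonsing_inv X hXdet
  have hXA : X * A = diagonal lam * X := by
    rw [hA, ← Matrix.mul_assoc, ← Matrix.mul_assoc, hXinv', Matrix.one_mul]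
  have hlamne : ∀ k, lam k ≠ 0 := by
    intro k h
    have := hlam k; rw [h, abs_zero] at this; linarith
  have hDunit : IsUnit (diagonal lam) := by
    refine (Matrix.isUnit_iff_isUnit_det _).mpr ?_
    rw [Matrix.det_diagonal]
    exact isUnit_iff_ne_zero.mpr (Finset.prod_ne_zero_iff.mpr fun k _ => hlamne k)
  have hXinvUnit : IsUnit X⁻¹ := Matrix.isUnit_nonsing_inv_iff.mpr hX
  have hAunit : IsUnit A := by rw [hA]; exact (hXinvUnit.mul hDunit).mul hX
  have hAdet : IsUnit A.det := (Matrix.isUnit_iff_isUnit_det A).mp hAunit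
  have hAinvA : A⁻¹ * A = 1 := Matrix.nonsing_inv_mul A hAdet
  have hDD : diagonal lam * diagonal (fun k => (lam k)⁻¹) = 1 := by
    rw [Matrix.diagonal_mul_diagonal,
      show (fun k => lam k * (lam k)⁻¹) = fun _ => (1:ℝ) from
        funext fun k => mul_inv_cancel₀ (hlamne k), Matrix.diagonal_one]
  have hAinv : A⁻¹ = X⁻¹ * diagonal (fun k => (lam k)⁻¹) * X := by
    apply Matrix.inv_eq_right_inv
    rw [hA]
    have hXR : X * (X⁻¹ * diagonal (fun k => (lam k)⁻¹) * X)
        = diagonal (fun k => (lam k)⁻¹) * X := by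
      rw [← Matrix.mul_assoc, ← Matrix.mul_assoc, hXinv', Matrix.one_mul]
    rw [Matrix.mul_assoc (X⁻¹ * diagonal lam), hXR, ← Matrix.mul_assoc,
      Matrix.mul_assoc X⁻¹, hDD, Matrix.mul_one, hXinv]
  set lamB : ℝ := -(c ⬝ᵥ A⁻¹.mulVec g) with hlamBdef
  set r : Fin l → ℝ := fun k => (c ᵥ* X⁻¹) k / lam k with hrdef
  set Xg : Fin l → ℝ := X.mulVec g with hXgdef
  set Cc : ℝ := ∑ i, |c i| with hCcdef
  set CW : Fin l → ℝ := fun k => ∑ j, |X k j| * ((∑ i, |A j i|) + |g j|) with hCWdef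
  set K₁ : ℝ := Cc * M * (∑ k, |r k| * |Xg k|) * (2/δ) with hK₁def
  have hM0 : (0:ℝ) ≤ M := hM.le
  have hCc0 : 0 ≤ Cc := Finset.sum_nonneg fun i _ => abs_nonneg _
  have hCW0 : ∀ k, 0 ≤ CW k := fun k => Finset.sum_nonneg fun j _ =>
    mul_nonneg (abs_nonneg _) (add_nonneg (Finset.sum_nonneg fun i _ => abs_nonneg _) (abs_nonneg _))
  have hrXg0 : 0 ≤ ∑ k, |r k| * |Xg k| :=
    Finset.sum_nonneg fun k _ => mul_nonneg (abs_nonneg _) (abs_nonneg _)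
  have hK₁0 : 0 ≤ K₁ := by
    rw [hK₁def]
    exact mul_nonneg (mul_nonneg (mul_nonneg hCc0 hM0) hrXg0) (by positivity)
  have hsum2nn : 0 ≤ ∑ k, |r k| * (CW k * M) :=
    Finset.sum_nonneg fun k _ => mul_nonneg (abs_nonneg _) (mul_nonneg (hCW0 k) hM0)
  refine ⟨1 + T₀ * K₁ + (4/δ) * ∑ k, |r k| * (CW k * M), ?_,
    min 1 (δ / (2 * (|lamB| + 1))), lt_min one_pos (by positivity), ?_⟩
  · have h1 : 0 ≤ T₀ * K₁ := mul_nonneg hT₀.le hK₁0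
    have h2 : 0 ≤ (4/δ) * ∑ k, |r k| * (CW k * M) := mul_nonneg (by positivity) hsum2nn
    linarith
  intro ε hε hεε₀ U B Ux Ut Uxx Uxt Utt Bx Bt Bxx Bxt Btt
    hreg1 hreg2 hUC2 hBC2 hbdd hders hsys hinit1 hinit2 hinit3 x t ht
  have hT : (0:ℝ) < T₀ / ε := div_pos hT₀ hε
  obtain ⟨hUline, hUsch⟩ := key_deriv (T₀/ε) hT U Ux Ut Uxx Uxt hUC2
    (fun a b hb => (hreg1 a b hb).1) (fun a b hb => (hreg1 a b hb).2.1)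
    (fun a b hb => (hreg2 a b hb).1) (fun a b hb => (hreg2 a b hb).2.1)
  obtain ⟨hBline, hBsch⟩ := key_deriv (T₀/ε) hT B Bx Bt Bxx Bxt hBC2
    (fun a b hb => (hreg1 a b hb).2.2.1) (fun a b hb => (hreg1 a b hb).2.2.2)
    (fun a b hb => (hreg2 a b hb).2.2.2.1) (fun a b hb => (hreg2 a b hb).2.2.2.2.1)
  -- mixed second derivative identities from the PDE system
  have hBxt_eq : ∀ a b, b ∈ Icc (0:ℝ) (T₀/ε) → Bxt a b = -(ε * (c ⬝ᵥ Uxx a b)) := by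
    intro a b hb
    have h1 := hBsch a b hb
    have h3 : (fun x' => Bt x' b) = fun x' => -(ε * (c ⬝ᵥ Ux x' b)) :=
      funext fun x' => by have := (hsys x' b hb).2; linarith
    rw [h3] at h1
    exact h1.unique (((hasDerivAt_dot c (hreg2 a b hb).1).const_mul ε).neg)
  have hUxt_eq : ∀ a b, b ∈ Icc (0:ℝ) (T₀/ε) →
      Uxt a b = -(A.mulVec (Uxx a b) + Bxx a b • g) := by
    intro a b hb
    have h1 := hUsch a b hb
    have h3 : (fun x' => Ut x' b) = fun x' => -(Bx x' b) • g - A.mulVec (Ux x' b) :=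
      funext fun x' => eq_sub_of_add_eq (hsys x' b hb).1
    rw [h3] at h1
    have h2 : HasDerivAt (fun x' => -(Bx x' b) • g - A.mulVec (Ux x' b))
        (-(Bxx a b) • g - A.mulVec (Uxx a b)) a :=
      (((hreg2 a b hb).2.2.2.1).neg.smul_const g).sub (hasDerivAt_mulVec A (hreg2 a b hb).1)
    rw [h1.unique h2]
    module
  -- geometric quantities
  set v : ℝ := ε * lamB with hvdef
  have ha1 : (0:ℝ) < |lamB| + 1 := by positivity
  have hvabs : |v| ≤ δ/2 := by
    have hε₀ : ε ≤ δ / (2 * (|lamB| + 1)) := le_trans hεε₀ (min_le_right _ _)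
    calc |v| = ε * |lamB| := by rw [hvdef, abs_mul, abs_of_pos hε]
    _ ≤ (δ / (2 * (|lamB| + 1))) * (|lamB| + 1) :=
        mul_le_mul hε₀ (by linarith) (abs_nonneg _) (by positivity)
    _ = δ/2 := by field_simp
  have hvlam : ∀ k, δ/2 ≤ |v - lam k| := by
    intro k
    have h1 := hlam k
    calc δ/2 = δ - δ/2 := by ring
    _ ≤ |lam k| - |v| := by linarith
    _ ≤ |lam k - v| := abs_sub_abs_le_abs_sub _ _
    _ = |v - lam k| := abs_sub_comm _ _
  have hvlamne : ∀ k, v - lam k ≠ 0 := by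
    intro k h
    have := hvlam k; rw [h, abs_zero] at this; linarith
  have hinvb : ∀ k, |v - lam k|⁻¹ ≤ 2/δ := by
    intro k
    have h := one_div_le_one_div_of_le (half_pos hδ) (hvlam k)
    rw [one_div_div] at h
    rwa [one_div] at h
  set x₀ : ℝ := x - lamB * ε * t with hx₀def
  set a : Fin l → ℝ := fun k => ε * r k / (v - lam k) with hadef
  set Zf : ℝ → ℝ := fun s => Bx (x₀ + v * s) s +
    ∑ k, a k * (X.mulVec (A.mulVec (Ux (x₀ + v * s) s) + Bx (x₀ + v * s) s • g)) k
    with hZdef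
  -- the derivative of Zf
  have hZs : ∀ s ∈ Icc (0:ℝ) (T₀/ε), HasDerivWithinAt Zf
      (-(ε^2 * (c ⬝ᵥ Uxx (x₀ + v * s) s)) * ∑ k, r k * Xg k / (v - lam k))
      (Icc 0 (T₀/ε)) s := by
    intro s hs
    have hU' := hUline v x₀ s hs
    have hB' := hBline v x₀ s hs
    have hW : HasDerivWithinAt
        (fun s' => A.mulVec (Ux (x₀ + v * s') s') + Bx (x₀ + v * s') s' • g)
        (A.mulVec (v • Uxx (x₀ + v * s) s + Uxt (x₀ + v * s) s)
          + (v • Bxx (x₀ + v * s) s + Bxt (x₀ + v * s) s) • g) (Icc 0 (T₀/ε)) s :=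
      (hasDerivWithinAt_mulVec A hU').add (hB'.smul_const g)
    have hψ : ∀ k : Fin l, HasDerivWithinAt
        (fun s' => (X.mulVec (A.mulVec (Ux (x₀ + v * s') s') + Bx (x₀ + v * s') s' • g)) k)
        ((X.mulVec (A.mulVec (v • Uxx (x₀ + v * s) s + Uxt (x₀ + v * s) s)
          + (v • Bxx (x₀ + v * s) s + Bxt (x₀ + v * s) s) • g)) k) (Icc 0 (T₀/ε)) s :=
      fun k => hasDerivWithinAt_pi_apply k (hasDerivWithinAt_mulVec X hW)
    have hZraw : HasDerivWithinAt Zf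
        ((v • Bxx (x₀ + v * s) s + Bxt (x₀ + v * s) s) +
          ∑ k, a k * (X.mulVec (A.mulVec (v • Uxx (x₀ + v * s) s + Uxt (x₀ + v * s) s)
            + (v • Bxx (x₀ + v * s) s + Bxt (x₀ + v * s) s) • g)) k) (Icc 0 (T₀/ε)) s :=
      hB'.add (HasDerivWithinAt.fun_sum fun k _ => (hψ k).const_mul (a k))
    have hval : (v • Bxx (x₀ + v * s) s + Bxt (x₀ + v * s) s) +
        ∑ k, a k * (X.mulVec (A.mulVec (v • Uxx (x₀ + v * s) s + Uxt (x₀ + v * s) s)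
          + (v • Bxx (x₀ + v * s) s + Bxt (x₀ + v * s) s) • g)) k
        = -(ε^2 * (c ⬝ᵥ Uxx (x₀ + v * s) s)) * ∑ k, r k * Xg k / (v - lam k) := by
      rw [hUxt_eq _ _ hs, hBxt_eq _ _ hs]
      set u : Fin l → ℝ := Uxx (x₀ + v * s) s with hudef
      set b : ℝ := Bxx (x₀ + v * s) s with hbdef
      have hgoalsum : ∑ k, a k * (X.mulVec (A.mulVec (v • u + -(A.mulVec u + b • g))
            + (v • b + -(ε * (c ⬝ᵥ u))) • g)) k
          = ∑ k, a k * ((v - lam k) * (X.mulVec (A.mulVec u + b • g)) k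
            - (ε * (c ⬝ᵥ u)) * (X.mulVec g) k) := by
        refine Finset.sum_congr rfl fun k _ => ?_
        rw [show (v • b : ℝ) = v * b by rw [smul_eq_mul],
          alg_vec A X lam g hXA v (ε * (c ⬝ᵥ u)) b u k]
      rw [hgoalsum]
      have hsum1 : ∑ k, a k * ((v - lam k) * (X.mulVec (A.mulVec u + b • g)) k
            - (ε * (c ⬝ᵥ u)) * (X.mulVec g) k)
          = ε * (∑ k, r k * (X.mulVec (A.mulVec u + b • g)) k)
            - ε * (ε * (c ⬝ᵥ u)) * ∑ k, r k * Xg k / (v - lam k) := by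
        have hgen : ∀ (d zk xgk rk κ : ℝ), d ≠ 0 →
            ε * rk / d * (d * zk - κ * xgk) = ε * (rk * zk) - ε * κ * (rk * xgk / d) := by
          intro d zk xgk rk κ hd
          field_simp
        rw [Finset.mul_sum, Finset.mul_sum, ← Finset.sum_sub_distrib]
        refine Finset.sum_congr rfl fun k _ => ?_
        simp only [hadef, hXgdef]
        exact hgen (v - lam k) ((X.mulVec (A.mulVec u + b • g)) k) ((X.mulVec g) k)
          (r k) (ε * (c ⬝ᵥ u)) (hvlamne k)
      have hsum2 : ∑ k, r k * (X.mulVec (A.mulVec u + b • g)) k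
          = (c ⬝ᵥ u) + b * -lamB := by
        have h1 := alg_sum A X lam c hAinv (A.mulVec u + b • g)
        have h2 := alg_dot A c g hAinvA b u
        calc ∑ k, r k * (X.mulVec (A.mulVec u + b • g)) k
            = c ⬝ᵥ A⁻¹.mulVec (A.mulVec u + b • g) := by
              rw [← h1]
        _ = c ⬝ᵥ u + b * (c ⬝ᵥ A⁻¹.mulVec g) := h2
        _ = (c ⬝ᵥ u) + b * -lamB := by rw [hlamBdef]; ring
      rw [hsum1, hsum2, smul_eq_mul, hvdef]
      ring
    exact hval ▸ hZraw
  -- bound on the derivative of Zf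
  have hZb : ∀ s ∈ Icc (0:ℝ) (T₀/ε),
      ‖-(ε^2 * (c ⬝ᵥ Uxx (x₀ + v * s) s)) * ∑ k, r k * Xg k / (v - lam k)‖ ≤ ε^2 * K₁ := by
    intro s hs
    have hcu : |c ⬝ᵥ Uxx (x₀ + v * s) s| ≤ Cc * M := by
      calc |c ⬝ᵥ Uxx (x₀ + v * s) s| ≤ ∑ i, |c i * Uxx (x₀ + v * s) s i| :=
            Finset.abs_sum_le_sum_abs _ _
      _ ≤ ∑ i, |c i| * M := by
          refine Finset.sum_le_sum fun i _ => ?_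
          rw [abs_mul]
          refine mul_le_mul_of_nonneg_left ?_ (abs_nonneg _)
          exact le_trans (by rw [← Real.norm_eq_abs]; exact norm_le_pi_norm _ i)
            (hders _ _ hs).2.2.1
      _ = Cc * M := by rw [hCcdef, Finset.sum_mul]
    have hS2 : |∑ k, r k * Xg k / (v - lam k)| ≤ (∑ k, |r k| * |Xg k|) * (2/δ) := by
      calc |∑ k, r k * Xg k / (v - lam k)| ≤ ∑ k, |r k * Xg k / (v - lam k)| :=
            Finset.abs_sum_le_sum_abs _ _
      _ ≤ ∑ k, (|r k| * |Xg k|) * (2/δ) := by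
          refine Finset.sum_le_sum fun k _ => ?_
          rw [abs_div, abs_mul, div_eq_mul_inv]
          exact mul_le_mul_of_nonneg_left (hinvb k)
            (mul_nonneg (abs_nonneg _) (abs_nonneg _))
      _ = (∑ k, |r k| * |Xg k|) * (2/δ) := by rw [Finset.sum_mul]
    have heq : ‖-(ε^2 * (c ⬝ᵥ Uxx (x₀ + v * s) s)) * ∑ k, r k * Xg k / (v - lam k)‖
        = ε^2 * (|c ⬝ᵥ Uxx (x₀ + v * s) s| * |∑ k, r k * Xg k / (v - lam k)|) := by
      rw [Real.norm_eq_abs, abs_mul, abs_neg, abs_mul, abs_of_nonneg (sq_nonneg ε), mul_assoc]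
    rw [heq]
    have hmm : |c ⬝ᵥ Uxx (x₀ + v * s) s| * |∑ k, r k * Xg k / (v - lam k)|
        ≤ (Cc * M) * ((∑ k, |r k| * |Xg k|) * (2/δ)) :=
      mul_le_mul hcu hS2 (abs_nonneg _) (mul_nonneg hCc0 hM0)
    calc ε^2 * (|c ⬝ᵥ Uxx (x₀ + v * s) s| * |∑ k, r k * Xg k / (v - lam k)|)
        ≤ ε^2 * ((Cc * M) * ((∑ k, |r k| * |Xg k|) * (2/δ))) :=
          mul_le_mul_of_nonneg_left hmm (sq_nonneg ε)
    _ = ε^2 * K₁ := by rw [hK₁def]; ring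
  -- mean value inequality on [0, t]
  have hsub : Icc (0:ℝ) t ⊆ Icc (0:ℝ) (T₀/ε) := Icc_subset_Icc le_rfl ht.2
  have hmvt := Convex.norm_image_sub_le_of_norm_hasDerivWithin_le
    (fun s hs => (hZs s (hsub hs)).mono hsub)
    (fun s hs => hZb s (hsub hs)) (convex_Icc 0 t)
    (left_mem_Icc.mpr ht.1) (right_mem_Icc.mpr ht.1)
  have hZdiff : |Zf t - Zf 0| ≤ ε * (K₁ * T₀) := by
    rw [Real.norm_eq_abs, Real.norm_eq_abs, sub_zero, abs_of_nonneg ht.1] at hmvt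
    have h2 : ε^2 * K₁ * t ≤ ε^2 * K₁ * (T₀/ε) :=
      mul_le_mul_of_nonneg_left ht.2 (mul_nonneg (sq_nonneg ε) hK₁0)
    have h3 : ε^2 * K₁ * (T₀/ε) = ε * (K₁ * T₀) := by field_simp
    linarith
  -- bound on the correction terms
  have hψbd : ∀ (k : Fin l), ∀ s ∈ Icc (0:ℝ) (T₀/ε),
      |(X.mulVec (A.mulVec (Ux (x₀ + v * s) s) + Bx (x₀ + v * s) s • g)) k| ≤ CW k * M := by
    intro k s hs
    have hcomp : ∀ j, |(A.mulVec (Ux (x₀ + v * s) s) + Bx (x₀ + v * s) s • g) j|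
        ≤ ((∑ i, |A j i|) + |g j|) * M := by
      intro j
      have h1 : |(A.mulVec (Ux (x₀ + v * s) s)) j| ≤ (∑ i, |A j i|) * M := by
        have e : (A.mulVec (Ux (x₀ + v * s) s)) j = ∑ i, A j i * Ux (x₀ + v * s) s i := by
          simp [Matrix.mulVec, dotProduct]
        rw [e]
        calc |∑ i, A j i * Ux (x₀ + v * s) s i| ≤ ∑ i, |A j i * Ux (x₀ + v * s) s i| :=
              Finset.abs_sum_le_sum_abs _ _
        _ ≤ ∑ i, |A j i| * M := by
            refine Finset.sum_le_sum fun i _ => ?_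
            rw [abs_mul]
            refine mul_le_mul_of_nonneg_left ?_ (abs_nonneg _)
            exact le_trans (by rw [← Real.norm_eq_abs]; exact norm_le_pi_norm _ i)
              (hders _ _ hs).1
        _ = (∑ i, |A j i|) * M := by rw [Finset.sum_mul]
      have h2 : |Bx (x₀ + v * s) s * g j| ≤ M * |g j| := by
        rw [abs_mul]
        exact mul_le_mul_of_nonneg_right (hders _ _ hs).2.2.2.2.2.1 (abs_nonneg _)
      calc |(A.mulVec (Ux (x₀ + v * s) s) + Bx (x₀ + v * s) s • g) j|
          = |(A.mulVec (Ux (x₀ + v * s) s)) j + Bx (x₀ + v * s) s * g j| := by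
            simp [Pi.add_apply, Pi.smul_apply, smul_eq_mul]
      _ ≤ |(A.mulVec (Ux (x₀ + v * s) s)) j| + |Bx (x₀ + v * s) s * g j| := abs_add_le _ _
      _ ≤ (∑ i, |A j i|) * M + M * |g j| := add_le_add h1 h2
      _ = ((∑ i, |A j i|) + |g j|) * M := by ring
    have e : (X.mulVec (A.mulVec (Ux (x₀ + v * s) s) + Bx (x₀ + v * s) s • g)) k
        = ∑ j, X k j * (A.mulVec (Ux (x₀ + v * s) s) + Bx (x₀ + v * s) s • g) j := by
      simp [Matrix.mulVec, dotProduct]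
    rw [e]
    calc |∑ j, X k j * (A.mulVec (Ux (x₀ + v * s) s) + Bx (x₀ + v * s) s • g) j|
        ≤ ∑ j, |X k j * (A.mulVec (Ux (x₀ + v * s) s) + Bx (x₀ + v * s) s • g) j| :=
          Finset.abs_sum_le_sum_abs _ _
    _ ≤ ∑ j, |X k j| * (((∑ i, |A j i|) + |g j|) * M) := by
        refine Finset.sum_le_sum fun j _ => ?_
        rw [abs_mul]
        exact mul_le_mul_of_nonneg_left (hcomp j) (abs_nonneg _)
    _ = CW k * M := by
        rw [hCWdef, Finset.sum_mul]
        exact Finset.sum_congr rfl fun j _ => by ring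
  have habs_a : ∀ k, |a k| ≤ ε * |r k| * (2/δ) := by
    intro k
    have e : |a k| = ε * |r k| * |v - lam k|⁻¹ := by
      rw [hadef]
      rw [abs_div, abs_mul, abs_of_pos hε, div_eq_mul_inv]
    rw [e]
    exact mul_le_mul_of_nonneg_left (hinvb k) (by positivity)
  have hSbd : ∀ s ∈ Icc (0:ℝ) (T₀/ε),
      |∑ k, a k * (X.mulVec (A.mulVec (Ux (x₀ + v * s) s) + Bx (x₀ + v * s) s • g)) k|
        ≤ ε * ((2/δ) * ∑ k, |r k| * (CW k * M)) := by
    intro s hs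
    calc |∑ k, a k * (X.mulVec (A.mulVec (Ux (x₀ + v * s) s) + Bx (x₀ + v * s) s • g)) k|
        ≤ ∑ k, |a k * (X.mulVec (A.mulVec (Ux (x₀ + v * s) s) + Bx (x₀ + v * s) s • g)) k| :=
          Finset.abs_sum_le_sum_abs _ _
    _ ≤ ∑ k, (ε * |r k| * (2/δ)) * (CW k * M) := by
        refine Finset.sum_le_sum fun k _ => ?_
        rw [abs_mul]
        exact mul_le_mul (habs_a k) (hψbd k s hs) (abs_nonneg _) (by positivity)
    _ = ε * ((2/δ) * ∑ k, |r k| * (CW k * M)) := by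
        rw [Finset.mul_sum, Finset.mul_sum]
        exact Finset.sum_congr rfl fun k _ => by ring
  -- assemble
  have hxt : x₀ + v * t = x := by rw [hx₀def, hvdef]; ring
  have hZft : Zf t = Bx x t +
      ∑ k, a k * (X.mulVec (A.mulVec (Ux (x₀ + v * t) t) + Bx (x₀ + v * t) t • g)) k := by
    rw [hZdef]
    simp only [hxt]
  have hZf0 : Zf 0 = Bx x₀ 0 +
      ∑ k, a k * (X.mulVec (A.mulVec (Ux (x₀ + v * 0) 0) + Bx (x₀ + v * 0) 0 • g)) k := by
    rw [hZdef]
    norm_num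
  have h0mem : (0:ℝ) ∈ Icc (0:ℝ) (T₀/ε) := ⟨le_rfl, hT.le⟩
  have hSt := hSbd t ht
  have hS0 := hSbd 0 h0mem
  have hsplit : Bx x t - Bx x₀ 0 = (Zf t - Zf 0)
      - (∑ k, a k * (X.mulVec (A.mulVec (Ux (x₀ + v * t) t) + Bx (x₀ + v * t) t • g)) k)
      + (∑ k, a k * (X.mulVec (A.mulVec (Ux (x₀ + v * 0) 0) + Bx (x₀ + v * 0) 0 • g)) k) := by
    rw [hZft, hZf0]; ring
  have hfinal : |Bx x t - Bx x₀ 0| ≤ ε * (K₁ * T₀)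
      + ε * ((2/δ) * ∑ k, |r k| * (CW k * M)) + ε * ((2/δ) * ∑ k, |r k| * (CW k * M)) := by
    rw [hsplit]
    calc |(Zf t - Zf 0)
        - (∑ k, a k * (X.mulVec (A.mulVec (Ux (x₀ + v * t) t) + Bx (x₀ + v * t) t • g)) k)
        + (∑ k, a k * (X.mulVec (A.mulVec (Ux (x₀ + v * 0) 0) + Bx (x₀ + v * 0) 0 • g)) k)|
        ≤ |(Zf t - Zf 0)
          - (∑ k, a k * (X.mulVec (A.mulVec (Ux (x₀ + v * t) t) + Bx (x₀ + v * t) t • g)) k)|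
          + |∑ k, a k * (X.mulVec (A.mulVec (Ux (x₀ + v * 0) 0) + Bx (x₀ + v * 0) 0 • g)) k| :=
          abs_add_le _ _
    _ ≤ (|Zf t - Zf 0|
          + |∑ k, a k * (X.mulVec (A.mulVec (Ux (x₀ + v * t) t) + Bx (x₀ + v * t) t • g)) k|)
          + |∑ k, a k * (X.mulVec (A.mulVec (Ux (x₀ + v * 0) 0) + Bx (x₀ + v * 0) 0 • g)) k| :=
          add_le_add (abs_sub _ _) le_rfl
    _ ≤ ε * (K₁ * T₀) + ε * ((2/δ) * ∑ k, |r k| * (CW k * M))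
          + ε * ((2/δ) * ∑ k, |r k| * (CW k * M)) :=
        add_le_add (add_le_add hZdiff hSt) hS0
  have hdiff : (1 + T₀ * K₁ + (4/δ) * ∑ k, |r k| * (CW k * M)) * ε
      - (ε * (K₁ * T₀) + ε * ((2/δ) * ∑ k, |r k| * (CW k * M))
        + ε * ((2/δ) * ∑ k, |r k| * (CW k * M))) = ε := by ring
  have := hε.le
  linarith [hfinal]
end Key
end

section
/- Propagation of approximate steadiness (intermediate claim in the proof of Lemma 1). For every M > 0 and T₀ > 0 there exist C > 0 and ε₀ > 0, depending only on l, A, X, Λ, g, c, δ, M and T₀, such that the following holds for every ε ∈ (0, ε₀]: if (U, B) is a bounded C¹ solution of the system on ℝ × [0, T₀/ε] with first-order partial derivatives bounded by M, and sup_x |A U_x(x,0) + g B_x(x,0)| ≤ M ε, then sup_{x∈ℝ, 0 ≤ t ≤ T₀/ε} |A U_x(x,t) + g B_x(x,t)| ≤ C ε; equivalently, sup_{x, t} |U_t(x,t)| ≤ C ε on ℝ × [0, T₀/ε]. -/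
open Matrix Set

/-- Transport: a C¹ scalar solution of `f_t + d f_x = 0` on `ℝ × [0,T]` is
constant along characteristics. -/
lemma transport_const {T d : ℝ} (hT : 0 < T) {f fx ft : ℝ → ℝ → ℝ}
    (hC1 : ContDiffOn ℝ 1 (fun p : ℝ × ℝ => f p.1 p.2) (univ ×ˢ Icc 0 T))
    (hx : ∀ x : ℝ, ∀ t ∈ Icc (0:ℝ) T, HasDerivAt (fun x' => f x' t) (fx x t) x)
    (ht : ∀ x : ℝ, ∀ t ∈ Icc (0:ℝ) T,
      HasDerivWithinAt (fun t' => f x t') (ft x t) (Icc 0 T) t)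
    (hpde : ∀ x : ℝ, ∀ t ∈ Icc (0:ℝ) T, ft x t + d * fx x t = 0) :
    ∀ x : ℝ, ∀ t ∈ Icc (0:ℝ) T, f x t = f (x - d * t) 0 := by
  intro x t htT
  set S : Set (ℝ × ℝ) := univ ×ˢ Icc 0 T with hS
  set F : ℝ × ℝ → ℝ := fun p => f p.1 p.2 with hF
  have hdiff : DifferentiableOn ℝ F S := hC1.differentiableOn one_ne_zero
  have key : ∀ s ∈ Icc (0:ℝ) t,
      HasDerivWithinAt (fun s' => f (x - d * (t - s')) s') 0 (Icc 0 t) s := by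
    intro s hs
    have hsT : s ∈ Icc (0:ℝ) T := ⟨hs.1, hs.2.trans htT.2⟩
    set p : ℝ × ℝ := (x - d * (t - s), s) with hp
    have hpS : p ∈ S := ⟨mem_univ _, hsT⟩
    set L := fderivWithin ℝ F S p with hL
    have hFd : HasFDerivWithinAt F L S p := (hdiff p hpS).hasFDerivWithinAt
    -- L (1, 0) = fx p.1 p.2
    have h10 : L (1, 0) = fx p.1 p.2 := by
      have hγ : HasDerivAt (fun u : ℝ => (u, p.2)) ((1:ℝ), (0:ℝ)) p.1 :=
        HasDerivAt.prodMk (hasDerivAt_id p.1) (hasDerivAt_const p.1 p.2)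
      have hmaps : MapsTo (fun u : ℝ => (u, p.2)) univ S :=
        fun u _ => ⟨mem_univ _, hsT⟩
      have := hFd.comp_hasDerivWithinAt p.1 hγ.hasDerivWithinAt hmaps
      rw [hasDerivWithinAt_univ] at this
      exact (this.unique (hx p.1 s hsT)).symm ▸ rfl
    -- L (0, 1) = ft p.1 p.2
    have h01 : L (0, 1) = ft p.1 p.2 := by
      have hγ : HasDerivAt (fun u : ℝ => (p.1, u)) ((0:ℝ), (1:ℝ)) p.2 :=
        HasDerivAt.prodMk (hasDerivAt_const p.2 p.1) (hasDerivAt_id p.2)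
      have hmaps : MapsTo (fun u : ℝ => (p.1, u)) (Icc 0 T) S :=
        fun u hu => ⟨mem_univ _, hu⟩
      have h1 := hFd.comp_hasDerivWithinAt p.2 hγ.hasDerivWithinAt hmaps
      have hu : UniqueDiffWithinAt ℝ (Icc (0:ℝ) T) s := uniqueDiffOn_Icc hT s hsT
      have e1 : derivWithin (F ∘ fun u : ℝ => (p.1, u)) (Icc 0 T) p.2 = L (0, 1) :=
        h1.derivWithin (by exact hu)
      have e2 : derivWithin (fun t' => f p.1 t') (Icc 0 T) s = ft p.1 s :=
        (ht p.1 s hsT).derivWithin hu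
      have : (F ∘ fun u : ℝ => (p.1, u)) = fun t' => f p.1 t' := rfl
      rw [this] at e1
      rw [← e1, e2]
    -- derivative along the characteristic
    have hγ2 : HasDerivAt (fun s' : ℝ => (x - d * (t - s'), s')) (d, (1:ℝ)) s := by
      have h1 : HasDerivAt (fun s' : ℝ => x - d * (t - s')) d s := by
        have := (((hasDerivAt_id s).const_sub t).const_mul d).const_sub x
        simpa using this.congr_deriv (by ring)
      exact HasDerivAt.prodMk h1 (hasDerivAt_id s)
    have hmaps2 : MapsTo (fun s' : ℝ => (x - d * (t - s'), s')) (Icc 0 t) S :=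
      fun u hu => ⟨mem_univ _, ⟨hu.1, hu.2.trans htT.2⟩⟩
    have hcomp := hFd.comp_hasDerivWithinAt_of_eq s hγ2.hasDerivWithinAt hmaps2 rfl
    have hval : L (d, (1:ℝ)) = 0 := by
      have : ((d, (1:ℝ)) : ℝ × ℝ) = d • ((1:ℝ), (0:ℝ)) + ((0:ℝ), (1:ℝ)) := by
        simp [Prod.ext_iff]
      rw [this, map_add, L.map_smul, h10, h01, smul_eq_mul]
      have := hpde p.1 s hsT
      linarith
    rw [hval] at hcomp
    exact hcomp
  have hconst := (convex_Icc (0:ℝ) t).norm_image_sub_le_of_norm_hasDerivWithin_le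
    (C := 0) (f' := fun _ => (0:ℝ)) key (fun s _ => by simp) ⟨le_refl 0, htT.1⟩
    ⟨htT.1, le_refl t⟩
  have h0 : (fun s' => f (x - d * (t - s')) s') t = f x t := by
    simp
  have h1 : (fun s' => f (x - d * (t - s')) s') 0 = f (x - d * t) 0 := by simp
  have : |f x t - f (x - d * t) 0| ≤ 0 := by
    calc |f x t - f (x - d * t) 0|
        = ‖(fun s' => f (x - d * (t - s')) s') t -
            (fun s' => f (x - d * (t - s')) s') 0‖ := by rw [h0, h1]; rfl
      _ ≤ 0 * ‖t - (0:ℝ)‖ := hconst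
      _ = 0 := by ring
  have := abs_nonpos_iff.mp this
  linarith [sub_eq_zero.mp this]


set_option maxHeartbeats 2000000 in
/-- Propagation of approximate steadiness (intermediate claim in the proof of
Lemma 1): under the eigenvalue-perturbation decomposition
`C^ε = (K^ε)⁻¹ D^ε K^ε` of the coupled matrix, with all perturbation
quantities bounded by `M`, an initially `O(ε)`-steady bounded `C¹` solution
of `U_t + A U_x = −g B_x`, `B_t + ε cᵀ U_x = 0` stays `O(ε)`-steady on
`ℝ × [0, T₀/ε]`:  `|A U_x + g B_x| ≤ C ε`, equivalently `|U_t| ≤ C ε`. -/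
theorem stmt_8 (l : ℕ) (A X : Matrix (Fin l) (Fin l) ℝ) (lam : Fin l → ℝ)
    (g c : Fin l → ℝ) (δ : ℝ) (hδ : 0 < δ)
    (hX : IsUnit X) (hA : A = X⁻¹ * Matrix.diagonal lam * X)
    (hdistinct : ∀ i j : Fin l, i ≠ j → lam i ≠ lam j)
    (hlam : ∀ i : Fin l, δ ≤ |lam i|)
    (M T₀ : ℝ) (hM : 0 < M) (hT₀ : 0 < T₀) :
    ∃ C > 0, ∃ ε₀ > 0, ∀ ε : ℝ, 0 < ε → ε ≤ ε₀ →
      ∀ (Xhat : Matrix (Fin l) (Fin l) ℝ) (αhat βhat lamhat : Fin l → ℝ)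
        (θhat μ : ℝ) (Kmat Dmat : Matrix (Fin l ⊕ Unit) (Fin l ⊕ Unit) ℝ),
        -- the perturbed eigenvector and eigenvalue matrices K^ε and D^ε
        Kmat = Matrix.fromBlocks (X + ε • Xhat)
            (Matrix.of fun i _ =>
              (Matrix.diagonal lam)⁻¹.mulVec (X.mulVec g) i + ε * αhat i)
            (Matrix.of fun _ j => ε * βhat j)
            (Matrix.of fun _ _ => 1 + ε * θhat) →
        Dmat = Matrix.fromBlocks
            (Matrix.diagonal lam + ε • Matrix.diagonal lamhat) 0 0
            (Matrix.of fun _ _ => ε * μ) →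
        IsUnit Kmat →
        -- the exact similarity C^ε = (K^ε)⁻¹ D^ε K^ε
        Matrix.fromBlocks A (Matrix.of fun i _ => g i)
            (Matrix.of fun _ j => ε * c j) 0 = Kmat⁻¹ * Dmat * Kmat →
        -- the perturbation quantities and (K^ε)⁻¹ are bounded by M
        (∀ i j, |Xhat i j| ≤ M) → (∀ i, |αhat i| ≤ M) → (∀ i, |βhat i| ≤ M) →
        (∀ i, |lamhat i| ≤ M) → |θhat| ≤ M → |μ| ≤ M →
        (∀ i j, |Kmat⁻¹ i j| ≤ M) →
        ∀ (U : ℝ → ℝ → Fin l → ℝ) (B : ℝ → ℝ → ℝ)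
          (Ux Ut : ℝ → ℝ → Fin l → ℝ) (Bx Bt : ℝ → ℝ → ℝ),
          -- (U, B) is a C¹ classical solution on ℝ × [0, T₀/ε]
          (∀ x : ℝ, ∀ t ∈ Icc (0 : ℝ) (T₀ / ε),
            HasDerivAt (fun x' => U x' t) (Ux x t) x ∧
            HasDerivWithinAt (fun t' => U x t') (Ut x t) (Icc 0 (T₀ / ε)) t ∧
            HasDerivAt (fun x' => B x' t) (Bx x t) x ∧
            HasDerivWithinAt (fun t' => B x t') (Bt x t) (Icc 0 (T₀ / ε)) t) →
          -- joint C¹ regularity of the solution on ℝ × [0, T₀/ε]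
          ContDiffOn ℝ 1 (fun p : ℝ × ℝ => U p.1 p.2)
            (univ ×ˢ Icc (0:ℝ) (T₀ / ε)) →
          ContDiffOn ℝ 1 (fun p : ℝ × ℝ => B p.1 p.2)
            (univ ×ˢ Icc (0:ℝ) (T₀ / ε)) →
          -- boundedness of the solution
          (∃ K : ℝ, ∀ x : ℝ, ∀ t ∈ Icc (0 : ℝ) (T₀ / ε),
            ‖U x t‖ ≤ K ∧ |B x t| ≤ K) →
          -- first-order partial derivatives bounded by M
          (∀ x : ℝ, ∀ t ∈ Icc (0 : ℝ) (T₀ / ε),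
            ‖Ux x t‖ ≤ M ∧ ‖Ut x t‖ ≤ M ∧ |Bx x t| ≤ M ∧ |Bt x t| ≤ M) →
          -- the linear hyperbolic system
          (∀ x : ℝ, ∀ t ∈ Icc (0 : ℝ) (T₀ / ε),
            Ut x t + A.mulVec (Ux x t) = -(Bx x t) • g ∧
            Bt x t + ε * (c ⬝ᵥ Ux x t) = 0) →
          -- approximate steadiness of the initial data
          (∀ x : ℝ, ‖A.mulVec (Ux x 0) + Bx x 0 • g‖ ≤ M * ε) →
          ∀ x : ℝ, ∀ t ∈ Icc (0 : ℝ) (T₀ / ε),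
            ‖A.mulVec (Ux x t) + Bx x t • g‖ ≤ C * ε ∧
            ‖Ut x t‖ ≤ C * ε := by
  -- constants
  set SX : ℝ := ∑ i, ∑ j, |X i j| with hSX
  set SXi : ℝ := ∑ i, ∑ j, |X⁻¹ i j| with hSXi
  set LS : ℝ := ∑ i, |lam i| with hLS
  set C0 : ℝ := δ⁻¹ * SX * M + 2 * (((l:ℝ) + 1) * M * M) with hC0
  have hSXnn : 0 ≤ SX := Finset.sum_nonneg fun i _ =>
    Finset.sum_nonneg fun j _ => abs_nonneg _
  have hSXinn : 0 ≤ SXi := Finset.sum_nonneg fun i _ =>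
    Finset.sum_nonneg fun j _ => abs_nonneg _
  have hLSnn : 0 ≤ LS := Finset.sum_nonneg fun i _ => abs_nonneg _
  have hC0nn : 0 ≤ C0 := by positivity
  refine ⟨SXi * (LS * C0) + 1, by positivity, 1, one_pos, ?_⟩
  intro ε hε hε1 Xhat αhat βhat lamhat θhat μ Kmat Dmat hKdef hDdef hKunit hSim
  intro hXhatb hαb hβb hlamhatb hθb hμb hKinvb
  intro U B Ux Ut Bx Bt hsol hUC1 hBC1 hbdd hderiv hsys hinit
  have hT : 0 < T₀ / ε := div_pos hT₀ hε
  have h0mem : (0:ℝ) ∈ Icc (0:ℝ) (T₀ / ε) := ⟨le_refl _, le_of_lt hT⟩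
  have hlam0 : ∀ i, lam i ≠ 0 := fun i => by
    intro h; have := hlam i; rw [h, abs_zero] at this; linarith
  have hXdet : IsUnit X.det := (Matrix.isUnit_iff_isUnit_det X).mp hX
  have hKdet : IsUnit Kmat.det := (Matrix.isUnit_iff_isUnit_det Kmat).mp hKunit
  -- notation
  set r : Fin l → Fin l → ℝ := fun i k => X i k + ε * Xhat i k with hr
  set b : Fin l → ℝ := fun i => (lam i)⁻¹ * (X.mulVec g) i + ε * αhat i with hb
  set d : Fin l → ℝ := fun i => lam i + ε * lamhat i with hd
  set W : ℝ → ℝ → Fin l → ℝ :=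
    fun x t => A.mulVec (Ux x t) + Bx x t • g with hW
  -- K * C = D * K
  have hKC : Kmat * Matrix.fromBlocks A (Matrix.of fun i _ => g i)
      (Matrix.of fun _ j => ε * c j) 0 = Dmat * Kmat := by
    rw [hSim, ← Matrix.mul_assoc, ← Matrix.mul_assoc,
      Matrix.mul_nonsing_inv _ hKdet, Matrix.one_mul]
  -- block (inl i, inr) of K C = D K :  ∑ k, r i k * g k = d i * b i
  have hdinv : (Matrix.diagonal lam)⁻¹ = Matrix.diagonal (fun i => (lam i)⁻¹) := by
    apply Matrix.inv_eq_right_inv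
    rw [Matrix.diagonal_mul_diagonal]
    have : (fun i => lam i * (lam i)⁻¹) = fun _ : Fin l => (1:ℝ) :=
      funext fun i => mul_inv_cancel₀ (hlam0 i)
    rw [this, Matrix.diagonal_one]
  have hdiaginv : ∀ i, (Matrix.diagonal lam)⁻¹.mulVec (X.mulVec g) i
      = (lam i)⁻¹ * (X.mulVec g) i := by
    intro i
    rw [hdinv, Matrix.mulVec_diagonal]
  have hstar2 : ∀ i, (∑ k, r i k * g k) = d i * b i := by
    intro i
    have h := congrFun (congrFun hKC (Sum.inl i)) (Sum.inr ())
    simp only [hKdef, hDdef, Matrix.mul_apply, Fintype.sum_sum_type,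
      Finset.univ_unique, Finset.sum_singleton,
      Matrix.fromBlocks_apply₁₁, Matrix.fromBlocks_apply₁₂,
      Matrix.fromBlocks_apply₂₁, Matrix.fromBlocks_apply₂₂,
      Matrix.of_apply, Matrix.add_apply, Matrix.smul_apply,
      Matrix.diagonal_apply, smul_eq_mul, Matrix.zero_apply,
      mul_zero, add_zero, zero_mul, zero_add, ite_mul, mul_ite,
      Finset.sum_ite_eq, Finset.mem_univ, if_true, add_mul,
      Finset.sum_add_distrib] at h
    rw [hdiaginv] at h
    simp only [hr, hb, hd, add_mul, Finset.sum_add_distrib]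
    linear_combination h
  -- block (inl i, inl j):  ∑ k, r i k * A k j + b i * (ε * c j) = d i * r i j
  have hstar : ∀ i j, (∑ k, r i k * A k j) + b i * (ε * c j) = d i * r i j := by
    intro i j
    have h := congrFun (congrFun hKC (Sum.inl i)) (Sum.inl j)
    simp only [hKdef, hDdef, Matrix.mul_apply, Fintype.sum_sum_type,
      Finset.univ_unique, Finset.sum_singleton,
      Matrix.fromBlocks_apply₁₁, Matrix.fromBlocks_apply₁₂,
      Matrix.fromBlocks_apply₂₁, Matrix.fromBlocks_apply₂₂,
      Matrix.of_apply, Matrix.add_apply, Matrix.smul_apply,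
      Matrix.diagonal_apply, smul_eq_mul, Matrix.zero_apply,
      mul_zero, add_zero, zero_mul, zero_add, ite_mul, mul_ite,
      Finset.sum_ite_eq, Finset.mem_univ, if_true, add_mul,
      Finset.sum_add_distrib] at h
    rw [hdiaginv] at h
    simp only [hr, hb, hd, add_mul, Finset.sum_add_distrib]
    linear_combination h
  -- X * A = diagonal lam * X, entrywise
  have hXA : ∀ i j, (∑ k, X i k * A k j) = lam i * X i j := by
    intro i j
    have hXAeq : X * A = Matrix.diagonal lam * X := by
      rw [hA, ← Matrix.mul_assoc, ← Matrix.mul_assoc,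
        Matrix.mul_nonsing_inv _ hXdet, Matrix.one_mul]
    have h := congrFun (congrFun hXAeq i) j
    simpa [Matrix.mul_apply, Matrix.diagonal, ite_mul, Finset.sum_ite_eq] using h
  set P : Fin l → ℝ → ℝ → ℝ :=
    fun i x t => (∑ k, Xhat i k * Ux x t k) + αhat i * Bx x t with hP
  -- bound on the derivatives componentwise
  have hUxb : ∀ x : ℝ, ∀ t ∈ Icc (0:ℝ) (T₀/ε), ∀ k, |Ux x t k| ≤ M := by
    intro x t htm k
    have h1 := norm_le_pi_norm (Ux x t) k
    have h2 := (hderiv x t htm).1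
    rw [Real.norm_eq_abs] at h1
    linarith
  have hPb : ∀ i : Fin l, ∀ x : ℝ, ∀ t ∈ Icc (0:ℝ) (T₀/ε),
      |P i x t| ≤ ((l:ℝ) + 1) * M * M := by
    intro i x t htm
    have h1 : |∑ k, Xhat i k * Ux x t k| ≤ (l:ℝ) * (M * M) := by
      calc |∑ k, Xhat i k * Ux x t k| ≤ ∑ k, |Xhat i k * Ux x t k| :=
            Finset.abs_sum_le_sum_abs _ _
        _ ≤ ∑ _k : Fin l, M * M := by
            refine Finset.sum_le_sum fun k _ => ?_
            rw [abs_mul]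
            exact mul_le_mul (hXhatb i k) (hUxb x t htm k) (abs_nonneg _) hM.le
        _ = (l:ℝ) * (M * M) := by
            rw [Finset.sum_const, Finset.card_univ, Fintype.card_fin,
              nsmul_eq_mul]
    have h2 : |αhat i * Bx x t| ≤ M * M := by
      rw [abs_mul]
      exact mul_le_mul (hαb i) (hderiv x t htm).2.2.1 (abs_nonneg _) hM.le
    calc |P i x t| ≤ |∑ k, Xhat i k * Ux x t k| + |αhat i * Bx x t| :=
          abs_add_le _ _
      _ ≤ (l:ℝ) * (M * M) + M * M := add_le_add h1 h2
      _ = ((l:ℝ) + 1) * M * M := by ring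
  -- the main estimate on (X *ᵥ W) i, uniformly in (x, t)
  have hXW : ∀ i : Fin l, ∀ x : ℝ, ∀ t ∈ Icc (0:ℝ) (T₀/ε),
      |(X.mulVec (W x t)) i| ≤ LS * (C0 * ε) := by
    intro i
    set y : ℝ → ℝ → ℝ := fun x t => (∑ k, r i k * U x t k) + b i * B x t with hy
    set yx : ℝ → ℝ → ℝ :=
      fun x t => (∑ k, r i k * Ux x t k) + b i * Bx x t with hyxdef
    set yt : ℝ → ℝ → ℝ :=
      fun x t => (∑ k, r i k * Ut x t k) + b i * Bt x t with hytdef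
    have hyxD : ∀ x : ℝ, ∀ t ∈ Icc (0:ℝ) (T₀/ε),
        HasDerivAt (fun x' => y x' t) (yx x t) x := by
      intro x t htm
      have hU := (hsol x t htm).1
      have hB' := (hsol x t htm).2.2.1
      have hsum : HasDerivAt (fun x' => ∑ k, r i k * U x' t k)
          (∑ k, r i k * Ux x t k) x := by
        apply HasDerivAt.fun_sum
        intro k _
        have hk : HasDerivAt (fun x' => U x' t k) (Ux x t k) x :=
          (ContinuousLinearMap.proj (R := ℝ) (φ := fun _ : Fin l => ℝ)
            k).hasFDerivAt.comp_hasDerivAt x hU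
        exact hk.const_mul (r i k)
      exact hsum.add (hB'.const_mul (b i))
    have hytD : ∀ x : ℝ, ∀ t ∈ Icc (0:ℝ) (T₀/ε),
        HasDerivWithinAt (fun t' => y x t') (yt x t) (Icc 0 (T₀/ε)) t := by
      intro x t htm
      have hU := (hsol x t htm).2.1
      have hB' := (hsol x t htm).2.2.2
      have hsum : HasDerivWithinAt (fun t' => ∑ k, r i k * U x t' k)
          (∑ k, r i k * Ut x t k) (Icc 0 (T₀/ε)) t := by
        apply HasDerivWithinAt.fun_sum
        intro k _
        have hk : HasDerivWithinAt (fun t' => U x t' k) (Ut x t k)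
            (Icc 0 (T₀/ε)) t :=
          (ContinuousLinearMap.proj (R := ℝ) (φ := fun _ : Fin l => ℝ)
            k).hasFDerivAt.comp_hasDerivWithinAt t hU
        exact hk.const_mul (r i k)
      exact hsum.add (hB'.const_mul (b i))
    have hyC1 : ContDiffOn ℝ 1 (fun p : ℝ × ℝ => y p.1 p.2)
        (univ ×ˢ Icc (0:ℝ) (T₀/ε)) := by
      apply ContDiffOn.add
      · apply ContDiffOn.sum
        intro k _
        exact contDiffOn_const.mul
          (((ContinuousLinearMap.proj (R := ℝ) (φ := fun _ : Fin l => ℝ)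
            k).contDiff).comp_contDiffOn hUC1)
      · exact contDiffOn_const.mul hBC1
    have hypde : ∀ x : ℝ, ∀ t ∈ Icc (0:ℝ) (T₀/ε),
        yt x t + d i * yx x t = 0 := by
      intro x t htm
      have h1 := (hsys x t htm).1
      have h2 := (hsys x t htm).2
      have hUt : ∀ k, Ut x t k = -(∑ j, A k j * Ux x t j) - Bx x t * g k := by
        intro k
        have := congrFun h1 k
        simp only [Pi.add_apply, Pi.smul_apply, Pi.neg_apply, smul_eq_mul,
          Matrix.mulVec, dotProduct, neg_mul] at this
        linarith
      have hBt : Bt x t = -(ε * ∑ j, c j * Ux x t j) := by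
        simp only [dotProduct] at h2
        linarith
      have swap : ∑ k, r i k * (∑ j, A k j * Ux x t j)
          = ∑ j, (∑ k, r i k * A k j) * Ux x t j := by
        calc ∑ k, r i k * (∑ j, A k j * Ux x t j)
            = ∑ k, ∑ j, r i k * (A k j * Ux x t j) := by
              refine Finset.sum_congr rfl fun k _ => ?_
              rw [Finset.mul_sum]
          _ = ∑ j, ∑ k, r i k * (A k j * Ux x t j) := Finset.sum_comm
          _ = ∑ j, (∑ k, r i k * A k j) * Ux x t j := by
              refine Finset.sum_congr rfl fun j _ => ?_
              rw [Finset.sum_mul]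
              exact Finset.sum_congr rfl fun k _ => (mul_assoc _ _ _).symm
      have t3 : ∑ j, (∑ k, r i k * A k j) * Ux x t j
          = d i * (∑ j, r i j * Ux x t j)
            - b i * ε * (∑ j, c j * Ux x t j) := by
        calc ∑ j, (∑ k, r i k * A k j) * Ux x t j
            = ∑ j, (d i * (r i j * Ux x t j)
                - b i * ε * (c j * Ux x t j)) := by
              refine Finset.sum_congr rfl fun j _ => ?_
              have h5 : (∑ k, r i k * A k j) = d i * r i j - b i * (ε * c j) := by
                linarith [hstar i j]
              rw [h5]; ring
          _ = d i * (∑ j, r i j * Ux x t j)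
              - b i * ε * (∑ j, c j * Ux x t j) := by
              rw [Finset.sum_sub_distrib, ← Finset.mul_sum, ← Finset.mul_sum]
      have h4 : ∑ k, r i k * Ut x t k
          = ∑ k, (-(r i k * (∑ j, A k j * Ux x t j))
              - (r i k * g k) * Bx x t) := by
        refine Finset.sum_congr rfl fun k _ => ?_
        rw [hUt k]; ring
      have h6 : ∑ k, (-(r i k * (∑ j, A k j * Ux x t j))
              - (r i k * g k) * Bx x t)
          = -(∑ k, r i k * (∑ j, A k j * Ux x t j))
            - (∑ k, r i k * g k) * Bx x t := by
        rw [Finset.sum_sub_distrib, ← Finset.sum_mul]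
        congr 1
        rw [← Finset.sum_neg_distrib]
      simp only [hytdef, hyxdef]
      rw [hBt, h4, h6, swap, t3, hstar2 i]
      ring
    -- transport along the characteristic
    have htrans := transport_const hT hyC1 hyxD hytD hypde
    have hyx_trans : ∀ x : ℝ, ∀ t ∈ Icc (0:ℝ) (T₀/ε),
        yx x t = yx (x - d i * t) 0 := by
      intro x t htm
      have hfun : (fun x' => y x' t) = (fun x' => y (x' - d i * t) 0) :=
        funext fun x' => htrans x' t htm
      have hg1 : HasDerivAt (fun x' : ℝ => x' - d i * t) 1 x :=
        (hasDerivAt_id x).sub_const _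
      have hR := (hyxD (x - d i * t) 0 h0mem).comp x hg1
      have hL := hyxD x t htm
      rw [hfun] at hL
      have := hL.unique hR
      simpa using this
    -- pointwise algebraic identity for yx
    have hyx_id : ∀ x t : ℝ, yx x t
        = (lam i)⁻¹ * (X.mulVec (W x t)) i + ε * P i x t := by
      intro x t
      have hXWi : (X.mulVec (W x t)) i
          = lam i * (∑ k, X i k * Ux x t k) + Bx x t * (X.mulVec g) i := by
        simp only [hW, Matrix.mulVec, dotProduct, Pi.add_apply,
          Pi.smul_apply, smul_eq_mul]
        calc ∑ j, X i j * ((∑ k, A j k * Ux x t k) + Bx x t * g j)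
            = ∑ j, ((∑ k, X i j * (A j k * Ux x t k))
                + X i j * g j * Bx x t) := by
              refine Finset.sum_congr rfl fun j _ => ?_
              rw [mul_add, Finset.mul_sum]; ring
          _ = (∑ j, ∑ k, X i j * (A j k * Ux x t k))
              + (∑ j, X i j * g j) * Bx x t := by
              rw [Finset.sum_add_distrib, ← Finset.sum_mul]
          _ = (∑ k, (∑ j, X i j * A j k) * Ux x t k)
              + (∑ j, X i j * g j) * Bx x t := by
              rw [Finset.sum_comm]
              congr 1
              refine Finset.sum_congr rfl fun k _ => ?_
              rw [Finset.sum_mul]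
              exact Finset.sum_congr rfl fun j _ => (mul_assoc _ _ _).symm
          _ = lam i * (∑ k, X i k * Ux x t k) + Bx x t * (X.mulVec g) i := by
              rw [Finset.mul_sum]
              congr 1
              · refine Finset.sum_congr rfl fun k _ => ?_
                rw [hXA i k]; ring
              · have hXg : (X.mulVec g) i = ∑ j, X i j * g j := rfl
                rw [hXg, mul_comm]
      have hsplit : ∑ k, r i k * Ux x t k
          = (∑ k, X i k * Ux x t k) + ε * ∑ k, Xhat i k * Ux x t k := by
        rw [Finset.mul_sum, ← Finset.sum_add_distrib]
        refine Finset.sum_congr rfl fun k _ => ?_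
        simp only [hr]; ring
      have hne := hlam0 i
      simp only [hyxdef, hb, hP]
      rw [hsplit, hXWi]
      field_simp
      ring
    -- bounds
    set C1 : ℝ := δ⁻¹ * SX * M + ((l:ℝ) + 1) * M * M with hC1def
    have hlami : |lam i| ≤ LS :=
      Finset.single_le_sum (f := fun j => |lam j|)
        (fun j _ => abs_nonneg _) (Finset.mem_univ i)
    have hlaminv : |lam i|⁻¹ ≤ δ⁻¹ := by
      apply inv_anti₀ hδ (hlam i)
    have hrowX : (∑ j, |X i j|) ≤ SX :=
      Finset.single_le_sum (f := fun i0 => ∑ j, |X i0 j|)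
        (fun i0 _ => Finset.sum_nonneg fun j _ => abs_nonneg _)
        (Finset.mem_univ i)
    have hy0 : ∀ x' : ℝ, |yx x' 0| ≤ C1 * ε := by
      intro x'
      rw [hyx_id x' 0]
      have hWj0 : ∀ j, |W x' 0 j| ≤ M * ε := by
        intro j
        have h1 := norm_le_pi_norm (W x' 0) j
        rw [Real.norm_eq_abs] at h1
        have h2 : ‖W x' 0‖ ≤ M * ε := hinit x'
        linarith
      have hXWb : |(X.mulVec (W x' 0)) i| ≤ SX * (M * ε) := by
        have hrfl : (X.mulVec (W x' 0)) i = ∑ j, X i j * W x' 0 j := rfl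
        rw [hrfl]
        calc |∑ j, X i j * W x' 0 j| ≤ ∑ j, |X i j * W x' 0 j| :=
              Finset.abs_sum_le_sum_abs _ _
          _ ≤ ∑ j, |X i j| * (M * ε) := by
              refine Finset.sum_le_sum fun j _ => ?_
              rw [abs_mul]
              exact mul_le_mul_of_nonneg_left (hWj0 j) (abs_nonneg _)
          _ = (∑ j, |X i j|) * (M * ε) := by rw [Finset.sum_mul]
          _ ≤ SX * (M * ε) := by
              apply mul_le_mul_of_nonneg_right hrowX (by positivity)
      have hterm1 : |(lam i)⁻¹ * (X.mulVec (W x' 0)) i|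
          ≤ δ⁻¹ * (SX * (M * ε)) := by
        rw [abs_mul, abs_inv]
        exact mul_le_mul hlaminv hXWb (abs_nonneg _) (by positivity)
      have hterm2 : |ε * P i x' 0| ≤ ε * (((l:ℝ) + 1) * M * M) := by
        rw [abs_mul, abs_of_pos hε]
        exact mul_le_mul_of_nonneg_left (hPb i x' 0 h0mem) hε.le
      have heq : δ⁻¹ * (SX * (M * ε)) + ε * (((l:ℝ) + 1) * M * M)
          = C1 * ε := by rw [hC1def]; ring
      calc |(lam i)⁻¹ * (X.mulVec (W x' 0)) i + ε * P i x' 0|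
          ≤ |(lam i)⁻¹ * (X.mulVec (W x' 0)) i| + |ε * P i x' 0| := abs_add_le _ _
        _ ≤ δ⁻¹ * (SX * (M * ε)) + ε * (((l:ℝ) + 1) * M * M) :=
            add_le_add hterm1 hterm2
        _ = C1 * ε := heq
    intro x t htm
    have hyxbd : |yx x t| ≤ C1 * ε := by
      rw [hyx_trans x t htm]; exact hy0 _
    have hsub : yx x t - ε * P i x t = (lam i)⁻¹ * (X.mulVec (W x t)) i := by
      rw [hyx_id x t]; ring
    have hXWit : (X.mulVec (W x t)) i = lam i * (yx x t - ε * P i x t) := by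
      rw [hsub, ← mul_assoc, mul_inv_cancel₀ (hlam0 i), one_mul]
    have hterm2 : |ε * P i x t| ≤ ε * (((l:ℝ) + 1) * M * M) := by
      rw [abs_mul, abs_of_pos hε]
      exact mul_le_mul_of_nonneg_left (hPb i x t htm) hε.le
    have h8 : |yx x t - ε * P i x t| ≤ C0 * ε := by
      have h9 : |yx x t - ε * P i x t| ≤ |yx x t| + |ε * P i x t| := by
        calc |yx x t - ε * P i x t| = |yx x t + -(ε * P i x t)| := by
              rw [sub_eq_add_neg]
          _ ≤ |yx x t| + |-(ε * P i x t)| := abs_add_le _ _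
          _ = |yx x t| + |ε * P i x t| := by rw [abs_neg]
      have heq2 : C1 * ε + ε * (((l:ℝ) + 1) * M * M) = C0 * ε := by
        rw [hC0, hC1def]; ring
      linarith
    rw [hXWit, abs_mul]
    exact mul_le_mul hlami h8 (abs_nonneg _) hLSnn
  -- conclusion
  intro x t htm
  have hXinvX : X⁻¹ * X = 1 := Matrix.nonsing_inv_mul X hXdet
  have hWrec : ∀ j, W x t j = ∑ i', X⁻¹ j i' * (X.mulVec (W x t)) i' := by
    intro j
    have h1 : X⁻¹.mulVec (X.mulVec (W x t)) = W x t := by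
      rw [Matrix.mulVec_mulVec, hXinvX, Matrix.one_mulVec]
    conv_lhs => rw [← h1]
    rfl
  have hWj : ∀ j, |W x t j| ≤ SXi * (LS * (C0 * ε)) := by
    intro j
    have hrowXi : (∑ i', |X⁻¹ j i'|) ≤ SXi :=
      Finset.single_le_sum (f := fun j0 => ∑ i', |X⁻¹ j0 i'|)
        (fun j0 _ => Finset.sum_nonneg fun i' _ => abs_nonneg _)
        (Finset.mem_univ j)
    rw [hWrec j]
    calc |∑ i', X⁻¹ j i' * (X.mulVec (W x t)) i'|
        ≤ ∑ i', |X⁻¹ j i' * (X.mulVec (W x t)) i'| :=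
          Finset.abs_sum_le_sum_abs _ _
      _ ≤ ∑ i', |X⁻¹ j i'| * (LS * (C0 * ε)) := by
          refine Finset.sum_le_sum fun i' _ => ?_
          rw [abs_mul]
          exact mul_le_mul_of_nonneg_left (hXW i' x t htm) (abs_nonneg _)
      _ = (∑ i', |X⁻¹ j i'|) * (LS * (C0 * ε)) := (Finset.sum_mul ..).symm
      _ ≤ SXi * (LS * (C0 * ε)) := by
          apply mul_le_mul_of_nonneg_right hrowXi (by positivity)
  have hfinal : ‖W x t‖ ≤ (SXi * (LS * C0) + 1) * ε := by
    have hnn : (0:ℝ) ≤ (SXi * (LS * C0) + 1) * ε := by positivity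
    rw [pi_norm_le_iff_of_nonneg hnn]
    intro j
    rw [Real.norm_eq_abs]
    have h1 := hWj j
    have heq : SXi * (LS * (C0 * ε)) = SXi * (LS * C0) * ε := by ring
    nlinarith
  constructor
  · exact hfinal
  · have h1 := (hsys x t htm).1
    have hUte : Ut x t = -(W x t) := by
      have h2 : Ut x t = -Bx x t • g - A.mulVec (Ux x t) := eq_sub_of_add_eq h1
      rw [h2, hW]
      funext k
      simp only [Pi.sub_apply, Pi.smul_apply, Pi.neg_apply, Pi.add_apply,
        smul_eq_mul]
      ring
    rw [hUte, norm_neg]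
    exact hfinal
end
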